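/- arXiv:math/9801100 — 5 statements merged into one kernel-verified Lean document; each statement's English description precedes it below -/
import Mathlib

section
/- Let G be a group with a filtration G = G^1 ⊇ G^2 ⊇ ⋯ satisfying [G^i, G^j] ⊆ G^{i+j}. Then the associated graded Lie ring Gr• G = ⊕_{i≥1} G^i/G^{i+1} is generated in degree 1 (i.e., by Gr^1 G = G/G^2) if and only if G^r = G^{r+1}·Γ^r G for every r ≥ 1, where Γ^• G is the lower central series of G. -/
open Pointwise
open scoped commutatorElement

private lemma lcs_succ_eq {G : Type*} [Group G] (n : ℕ) :
    Subgroup.lowerCentralSeries (⊤ : Subgroup G) (n + 1) = ⁅Subgroup.lowerCentralSeries (⊤ : Subgroup G) n, (⊤ : Subgroup G)⁆ := rfl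

private lemma lcs_le_Gf {G : Type*} [Group G] (Gf : ℕ → Subgroup G)
    (h1 : Gf 1 = ⊤)
    (hcent : ∀ i j : ℕ, 1 ≤ i → 1 ≤ j → ⁅Gf i, Gf j⁆ ≤ Gf (i + j)) :
    ∀ n : ℕ, Subgroup.lowerCentralSeries (⊤ : Subgroup G) n ≤ Gf (n + 1) := by
  intro n
  induction n with
  | zero => simp [h1]
  | succ n ih =>
      rw [lcs_succ_eq]
      calc ⁅Subgroup.lowerCentralSeries (⊤ : Subgroup G) n, (⊤ : Subgroup G)⁆
          ≤ ⁅Gf (n + 1), Gf 1⁆ := Subgroup.commutator_mono ih (by rw [h1])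
        _ ≤ Gf (n + 1 + 1) := hcent _ _ (by omega) le_rfl

/-- Bousfield's generation criterion (Lemma 2.3 of the paper): for a central-series
filtration `G = G^1 ⊇ G^2 ⊇ ⋯` with `[G^i,G^j] ⊆ G^{i+j}`, the associated graded Lie
ring `⊕ G^i/G^{i+1}` is generated by `Gr¹ G = G/G²` — i.e. each `Gr^{r+1}` is the span
of brackets of `Gr¹` with `Gr^r`, which in group terms says
`G^{r+1} = G^{r+2}·[G¹,G^r]` — if and only if `G^r = G^{r+1}·Γ^r G` for every `r ≥ 1`,
where `Γ^• G` is the lower central series (`Γ^r G = Subgroup.lowerCentralSeries (⊤ : Subgroup G) (r-1)`). -/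
theorem stmt5 {G : Type*} [Group G] (Gf : ℕ → Subgroup G)
    (h1 : Gf 1 = ⊤)
    (hdesc : ∀ r : ℕ, 1 ≤ r → Gf (r + 1) ≤ Gf r)
    (hcent : ∀ i j : ℕ, 1 ≤ i → 1 ≤ j → ⁅Gf i, Gf j⁆ ≤ Gf (i + j)) :
    (∀ r : ℕ, 1 ≤ r → Gf (r + 1) = Gf (r + 2) ⊔ ⁅Gf 1, Gf r⁆) ↔
    (∀ r : ℕ, 1 ≤ r →
      (Gf r : Set G) = (Gf (r + 1) : Set G) * (Subgroup.lowerCentralSeries (⊤ : Subgroup G) (r - 1) : Set G)) := by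
  -- rephrase the right-hand side as a subgroup equality
  have key : (∀ r : ℕ, 1 ≤ r →
      (Gf r : Set G) = (Gf (r + 1) : Set G) * (Subgroup.lowerCentralSeries (⊤ : Subgroup G) (r - 1) : Set G)) ↔
      (∀ n : ℕ, Gf (n + 1) = Gf (n + 2) ⊔ Subgroup.lowerCentralSeries (⊤ : Subgroup G) n) := by
    constructor
    · intro h n
      have := h (n + 1) (by omega)
      simp only [Nat.add_sub_cancel] at this
      apply SetLike.coe_injective
      rw [this, Subgroup.mul_normal]
    · intro h r hr
      obtain ⟨n, rfl⟩ : ∃ n, r = n + 1 := ⟨r - 1, by omega⟩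
      simp only [Nat.add_sub_cancel]
      rw [h n, Subgroup.mul_normal]
  rw [key]
  constructor
  · -- generation in degree 1 → Gf r = Gf (r+1) ⊔ Γ^r
    intro hA n
    induction n with
    | zero => simp [h1, Subgroup.lowerCentralSeries_zero]
    | succ n ih =>
        apply le_antisymm
        · rw [hA (n + 1) (by omega)]
          apply sup_le (le_sup_left.trans (le_of_eq rfl))
          -- ⁅Gf 1, Gf (n+1)⁆ ≤ Gf (n+3) ⊔ Γ^{n+1}
          rw [Subgroup.commutator_le]
          intro g₁ hg₁ g₂ hg₂
          rw [ih] at hg₂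
          have hg₂' : g₂ ∈ (Gf (n + 2) : Set G) * (Subgroup.lowerCentralSeries (⊤ : Subgroup G) n : Set G) := by
            rw [← Subgroup.mul_normal]; exact_mod_cast hg₂
          obtain ⟨a, ha, b, hb, rfl⟩ := hg₂'
          have hid : ⁅g₁, a * b⁆ = ⁅g₁, a⁆ * (a * ⁅g₁, b⁆ * a⁻¹) := by group
          rw [hid]
          apply mul_mem
          · apply Subgroup.mem_sup_left
            have h' : ⁅g₁, a⁆ ∈ Gf (1 + (n + 2)) :=
              hcent 1 (n + 2) le_rfl (by omega)
                (Subgroup.commutator_mem_commutator (by rw [h1]; trivial) ha)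
            rwa [show 1 + (n + 2) = n + 1 + 2 by omega] at h'
          · apply Subgroup.mem_sup_right
            have hc : ⁅g₁, b⁆ ∈ Subgroup.lowerCentralSeries (⊤ : Subgroup G) (n + 1) := by
              rw [lcs_succ_eq, Subgroup.commutator_comm]
              exact Subgroup.commutator_mem_commutator (Subgroup.mem_top g₁) hb
            exact (Subgroup.lowerCentralSeries_normal ⊤ (n + 1)).conj_mem _ hc a
        · apply sup_le (hdesc (n + 2) (by omega))
          exact lcs_le_Gf Gf h1 hcent (n + 1)
  · -- converse
    intro hB r hr
    obtain ⟨n, rfl⟩ : ∃ n, r = n + 1 := ⟨r - 1, by omega⟩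
    apply le_antisymm
    · rw [hB (n + 1)]
      apply sup_le le_sup_left
      apply le_sup_of_le_right
      rw [lcs_succ_eq, Subgroup.commutator_comm]
      refine Subgroup.commutator_mono (le_of_eq h1.symm) ?_
      exact lcs_le_Gf Gf h1 hcent n
    · apply sup_le (hdesc (n + 2) (by omega))
      have h' := hcent 1 (n + 1) le_rfl (by omega)
      rwa [show 1 + (n + 1) = n + 1 + 1 by omega] at h'
end

section
/- For Y ∈ SL_n(ℤ[t,t⁻¹]) with Y ≡ I mod (t−1)^i, write Y = I + (t−1)^i Y_i mod (t−1)^{i+1} with Y_i an integer matrix. This is well-defined (using (t⁻¹−1)^i ≡ (−1)^i (t−1)^i mod (t−1)^{i+1}), Y_i has trace 0, and the resulting map σ_i from the i-th congruence subgroup to sl_n(ℤ) is a surjective group homomorphism with kernel the (i+1)-st congruence subgroup. -/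
open LaurentPolynomial

abbrev SLL (n : ℕ) := Matrix.SpecialLinearGroup (Fin n) (LaurentPolynomial ℤ)

/-- `t ∈ ℤ[t,t⁻¹]`. -/
noncomputable def tL : LaurentPolynomial ℤ := LaurentPolynomial.T (1 : ℤ)

/-- The congruence subgroup `K^i = {Y : Y ≡ I mod (t-1)^i}` of `SL_n(ℤ[t,t⁻¹])`,
as a set (for `i ≥ 1` it lies in the kernel of evaluation at `t = 1`). -/
def KLau (n i : ℕ) : Set (SLL n) :=
  {Y | ∀ a b : Fin n, (tL - 1) ^ i ∣
    (Y.val a b - (1 : Matrix (Fin n) (Fin n) (LaurentPolynomial ℤ)) a b)}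

/-- `Y ≡ I + (t-1)^i · A mod (t-1)^{i+1}` with `A` an integer matrix. -/
def sigmaRel (n i : ℕ) (Y : SLL n) (A : Matrix (Fin n) (Fin n) ℤ) : Prop :=
  ∀ a b : Fin n, (tL - 1) ^ (i + 1) ∣
    (Y.val a b - (1 : Matrix (Fin n) (Fin n) (LaurentPolynomial ℤ)) a b -
      (tL - 1) ^ i * LaurentPolynomial.C (A a b))

namespace St9

instance : NoZeroDivisors (LaurentPolynomial ℤ) :=
  inferInstanceAs (NoZeroDivisors (AddMonoidAlgebra ℤ ℤ))

instance : IsDomain (LaurentPolynomial ℤ) := NoZeroDivisors.to_isDomain _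

noncomputable def ev1 : LaurentPolynomial ℤ →+* ℤ :=
  AddMonoidAlgebra.liftNCRingHom (RingHom.id ℤ) 1 (fun _ _ => Commute.all _ _)

lemma ev1_single (m : ℤ) (c : ℤ) : ev1 (AddMonoidAlgebra.single m c) = c := by
  show AddMonoidAlgebra.liftNC _ _ (AddMonoidAlgebra.single m c) = c
  rw [AddMonoidAlgebra.liftNC_single]; simp

lemma ev1_C (c : ℤ) : ev1 (LaurentPolynomial.C c) = c := ev1_single 0 c

lemma ev1_T (m : ℤ) : ev1 (T m) = 1 := ev1_single m 1

lemma ev1_toLaurent (p : Polynomial ℤ) : ev1 p.toLaurent = p.eval 1 := by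
  induction p using Polynomial.induction_on' with
  | add p q hp hq => simp [map_add, hp, hq]
  | monomial n a =>
      rw [← Polynomial.C_mul_X_pow_eq_monomial, Polynomial.toLaurent_C_mul_X_pow]
      rw [map_mul, ev1_C, ev1_T]; simp

lemma dvd_T_sub_one (m : ℤ) : (tL - 1) ∣ (T m - 1 : LaurentPolynomial ℤ) := by
  suffices h : ∀ k : ℕ, (tL - 1) ∣ (T (k : ℤ) - 1 : LaurentPolynomial ℤ) by
    rcases le_or_gt 0 m with hm | hm
    · obtain ⟨k, rfl⟩ := Int.eq_ofNat_of_zero_le hm; exact h k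
    · obtain ⟨k, hk⟩ : ∃ k : ℕ, m = -(k:ℤ) := ⟨m.natAbs, by omega⟩
      subst hk
      have key : (T (-(k:ℤ)) - 1 : LaurentPolynomial ℤ)
          = -(T (-(k:ℤ)) * (T (k:ℤ) - 1)) := by
        rw [mul_sub, ← T_add]; simp
      rw [key]
      exact ((h k).mul_left _).neg_right
  intro k
  induction k with
  | zero => simp
  | succ k ih =>
      have key : (T ((k:ℤ)+1) - 1 : LaurentPolynomial ℤ)
          = T (k:ℤ) * (tL - 1) + (T (k:ℤ) - 1) := by
        rw [T_add]; show _ = T (k:ℤ) * (T 1 - 1) + _; ring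
      push_cast
      rw [key]
      exact dvd_add (Dvd.intro_left _ rfl) ih

lemma ev1_ker_dvd (f : LaurentPolynomial ℤ) :
    (tL - 1) ∣ (f - LaurentPolynomial.C (ev1 f)) := by
  obtain ⟨m, p, hp⟩ := exists_T_pow f
  have h1 : (tL - 1) ∣ (p.toLaurent - LaurentPolynomial.C (p.eval 1)) := by
    obtain ⟨q, hq⟩ := Polynomial.X_sub_C_dvd_sub_C_eval (a := (1:ℤ)) (p := p)
    refine ⟨q.toLaurent, ?_⟩
    have := congrArg Polynomial.toLaurent hq
    simpa [map_mul, map_sub, Polynomial.toLaurent_C, Polynomial.toLaurent_X, tL] using this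
  have hf : f = p.toLaurent * T (-(m:ℤ)) := by
    have h2 := congrArg (· * T (-(m:ℤ))) hp
    simpa [mul_T_assoc] using h2.symm
  have hev : ev1 f = p.eval 1 := by rw [hf, map_mul, ev1_T, ev1_toLaurent, mul_one]
  rw [hev, hf]
  have key : p.toLaurent * T (-(m:ℤ)) - LaurentPolynomial.C (p.eval 1)
      = (p.toLaurent - LaurentPolynomial.C (p.eval 1)) * T (-(m:ℤ))
        + LaurentPolynomial.C (p.eval 1) * (T (-(m:ℤ)) - 1) := by ring
  rw [key]
  exact dvd_add (h1.mul_right _) ((dvd_T_sub_one _).mul_left _)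

lemma eq_zero_of_dvd_C {c : ℤ} (h : (tL - 1) ∣ LaurentPolynomial.C c) : c = 0 := by
  obtain ⟨g, hg⟩ := h
  have := congrArg ev1 hg
  simpa [ev1_C, map_mul, map_sub, ev1_T, tL] using this

lemma tL_sub_one_ne : (tL - 1 : LaurentPolynomial ℤ) ≠ 0 := by
  intro h
  have h2 : tL = 1 := by rwa [sub_eq_zero] at h
  have h3 := congrArg (fun f : LaurentPolynomial ℤ => f.coeff 1) h2
  rw [← single_zero_one_eq_one] at h3
  simp only [tL, T_apply, if_pos rfl] at h3
  rw [AddMonoidAlgebra.coeff_single, Finsupp.single_apply] at h3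
  simp at h3

lemma pow_dvd_cancel {i : ℕ} {g : LaurentPolynomial ℤ}
    (h : (tL - 1) ^ (i + 1) ∣ (tL - 1) ^ i * g) : (tL - 1) ∣ g := by
  rw [pow_succ] at h
  exact (mul_dvd_mul_iff_left (pow_ne_zero i tL_sub_one_ne)).mp h

open Matrix in
set_option maxHeartbeats 1000000 in
theorem expand4 {R : Type*} [CommRing R] {n : ℕ} (a b : Fin n) (hab : a ≠ b) (x y z w : R) :
    transvection a b x * (transvection b a y * (transvection a b z * transvection b a w)) =
      1 + Matrix.single a b x + Matrix.single b a y + Matrix.single a b z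
        + Matrix.single b a w
        + Matrix.single a a (x*y) + Matrix.single b b (y*z)
        + Matrix.single a b (x*y*z) + Matrix.single a a (x*w)
        + Matrix.single a a (z*w) + Matrix.single b a (y*z*w)
        + Matrix.single a a (x*y*z*w) := by
  simp only [Matrix.transvection, mul_add, add_mul, mul_one, one_mul,
    Matrix.single_mul_single_same, Matrix.single_mul_single_of_ne, ne_eq,
    hab, hab.symm, not_false_iff, add_zero, zero_add, mul_zero, zero_mul]
  ring_nf
  try abel

section Main

variable {n i : ℕ}

lemma sigmaRel_KLau {Y : SLL n} {A : Matrix (Fin n) (Fin n) ℤ}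
    (h : sigmaRel n i Y A) : Y ∈ KLau n i := by
  intro a b
  have h1 := h a b
  have key : Y.val a b - (1 : Matrix (Fin n) (Fin n) (LaurentPolynomial ℤ)) a b
      = (Y.val a b - (1 : Matrix (Fin n) (Fin n) (LaurentPolynomial ℤ)) a b -
          (tL - 1) ^ i * LaurentPolynomial.C (A a b))
        + (tL - 1) ^ i * LaurentPolynomial.C (A a b) := by ring
  rw [key]
  exact dvd_add ((pow_dvd_pow _ (Nat.le_succ i)).trans h1) (dvd_mul_right _ _)

lemma sigma_exists {Y : SLL n} (hY : Y ∈ KLau n i) :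
    ∃ A : Matrix (Fin n) (Fin n) ℤ, sigmaRel n i Y A := by
  refine ⟨fun a b => ev1 (hY a b).choose, fun a b => ?_⟩
  have hspec := (hY a b).choose_spec
  set q := (hY a b).choose with hq
  have key : Y.val a b - (1 : Matrix (Fin n) (Fin n) (LaurentPolynomial ℤ)) a b -
      (tL - 1) ^ i * LaurentPolynomial.C (ev1 q)
      = (tL - 1) ^ i * (q - LaurentPolynomial.C (ev1 q)) := by
    rw [hspec]; ring
  rw [key, pow_succ]
  exact mul_dvd_mul_left _ (ev1_ker_dvd q)

lemma sigma_unique {Y : SLL n} {A B : Matrix (Fin n) (Fin n) ℤ}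
    (hA : sigmaRel n i Y A) (hB : sigmaRel n i Y B) : A = B := by
  ext a b
  have hd := dvd_sub (hA a b) (hB a b)
  have key : (Y.val a b - (1 : Matrix (Fin n) (Fin n) (LaurentPolynomial ℤ)) a b -
        (tL - 1) ^ i * LaurentPolynomial.C (A a b)) -
      (Y.val a b - (1 : Matrix (Fin n) (Fin n) (LaurentPolynomial ℤ)) a b -
        (tL - 1) ^ i * LaurentPolynomial.C (B a b))
      = (tL - 1) ^ i * LaurentPolynomial.C (B a b - A a b) := by
    rw [map_sub]; ring
  rw [key] at hd
  have := eq_zero_of_dvd_C (pow_dvd_cancel hd)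
  omega

lemma KLau_one : (1 : SLL n) ∈ KLau n i := by
  intro a b
  simp

lemma sigma_one : sigmaRel n i 1 0 := by
  intro a b
  simp

lemma KLau_mul {Y Z : SLL n} (hY : Y ∈ KLau n i) (hZ : Z ∈ KLau n i) :
    Y * Z ∈ KLau n i := by
  intro a b
  have hmat : Y.val * Z.val - 1 = (Y.val - 1) * (Z.val - 1) + (Y.val - 1) + (Z.val - 1) := by
    noncomm_ring
  have h2 := congrFun (congrFun hmat a) b
  simp only [Matrix.sub_apply, Matrix.add_apply, Matrix.mul_apply] at h2
  have key : (Y * Z).val a b - (1 : Matrix (Fin n) (Fin n) (LaurentPolynomial ℤ)) a b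
      = (∑ c, (Y.val a c - (1 : Matrix (Fin n) (Fin n) (LaurentPolynomial ℤ)) a c) *
          (Z.val c b - (1 : Matrix (Fin n) (Fin n) (LaurentPolynomial ℤ)) c b))
        + (Y.val a b - (1 : Matrix (Fin n) (Fin n) (LaurentPolynomial ℤ)) a b)
        + (Z.val a b - (1 : Matrix (Fin n) (Fin n) (LaurentPolynomial ℤ)) a b) := by
    show (Y.val * Z.val) a b - _ = _
    rw [Matrix.mul_apply]
    simp only [Matrix.one_apply] at h2 ⊢
    linear_combination h2
  rw [key]
  refine dvd_add (dvd_add (Finset.dvd_sum fun c _ => ?_) (hY a b)) (hZ a b)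
  exact ((hY a c).mul_right _)

lemma sigma_hom (hi : 1 ≤ i) {Y Z : SLL n} {A B : Matrix (Fin n) (Fin n) ℤ}
    (hY : Y ∈ KLau n i) (hZ : Z ∈ KLau n i)
    (hA : sigmaRel n i Y A) (hB : sigmaRel n i Z B) :
    sigmaRel n i (Y * Z) (A + B) := by
  intro a b
  have hmat : Y.val * Z.val - 1 = (Y.val - 1) * (Z.val - 1) + (Y.val - 1) + (Z.val - 1) := by
    noncomm_ring
  have h2 := congrFun (congrFun hmat a) b
  simp only [Matrix.sub_apply, Matrix.add_apply, Matrix.mul_apply] at h2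
  have key : (Y * Z).val a b - (1 : Matrix (Fin n) (Fin n) (LaurentPolynomial ℤ)) a b -
      (tL - 1) ^ i * LaurentPolynomial.C ((A + B) a b)
      = (∑ c, (Y.val a c - (1 : Matrix (Fin n) (Fin n) (LaurentPolynomial ℤ)) a c) *
          (Z.val c b - (1 : Matrix (Fin n) (Fin n) (LaurentPolynomial ℤ)) c b))
        + (Y.val a b - (1 : Matrix (Fin n) (Fin n) (LaurentPolynomial ℤ)) a b -
            (tL - 1) ^ i * LaurentPolynomial.C (A a b))
        + (Z.val a b - (1 : Matrix (Fin n) (Fin n) (LaurentPolynomial ℤ)) a b -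
            (tL - 1) ^ i * LaurentPolynomial.C (B a b)) := by
    show (Y.val * Z.val) a b - _ - _ = _
    rw [Matrix.mul_apply, Matrix.add_apply, map_add]
    simp only [Matrix.one_apply] at h2 ⊢
    linear_combination h2
  rw [key]
  refine dvd_add (dvd_add (Finset.dvd_sum fun c _ => ?_) (hA a b)) (hB a b)
  have h3 : (tL - 1) ^ (i + 1) ∣ ((tL - 1) ^ i : LaurentPolynomial ℤ) * (tL - 1) ^ i := by
    rw [← pow_add]; exact pow_dvd_pow _ (by omega)
  exact h3.trans (mul_dvd_mul (hY a c) (hZ c b))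

lemma sigma_trace (hi : 1 ≤ i) {Y : SLL n} (hY : Y ∈ KLau n i)
    {A : Matrix (Fin n) (Fin n) ℤ} (hA : sigmaRel n i Y A) :
    Matrix.trace A = 0 := by
  classical
  set M : Matrix (Fin n) (Fin n) (LaurentPolynomial ℤ) :=
    Matrix.of fun a b => (hY a b).choose with hMdef
  have hM : ∀ a b, Y.val a b - (1 : Matrix (Fin n) (Fin n) (LaurentPolynomial ℤ)) a b
      = (tL - 1) ^ i * M a b := fun a b => (hY a b).choose_spec
  have hY1 : Y.val = 1 + ((tL - 1) ^ i) • M := by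
    refine Matrix.ext fun a b => ?_
    have := hM a b
    simp only [Matrix.add_apply, Matrix.smul_apply, smul_eq_mul]
    linear_combination this
  have hdet : Matrix.det Y.val = 1 := Y.2
  rw [hY1, Matrix.det_one_add_smul] at hdet
  set P := (Matrix.det (1 + (Polynomial.X : Polynomial (LaurentPolynomial ℤ)) •
      M.map Polynomial.C)).divX.divX.eval ((tL - 1) ^ i) with hP
  have heq : (tL - 1) ^ i * Matrix.trace M = -(P * ((tL - 1) ^ i) ^ 2) := by
    linear_combination hdet
  have h3 : (tL - 1) ^ (i + 1) ∣ (tL - 1) ^ i * Matrix.trace M := by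
    rw [heq]
    refine Dvd.dvd.neg_right (Dvd.dvd.mul_left ?_ P)
    rw [← pow_mul]
    exact pow_dvd_pow _ (by omega)
  have htr : (tL - 1) ∣ Matrix.trace M := pow_dvd_cancel h3
  have hsum : (tL - 1) ∣ Matrix.trace M - LaurentPolynomial.C (Matrix.trace A) := by
    have key : Matrix.trace M - LaurentPolynomial.C (Matrix.trace A)
        = ∑ a, (M a a - LaurentPolynomial.C (A a a)) := by
      rw [Matrix.trace, Matrix.trace, map_sum, Finset.sum_sub_distrib]
      rfl
    rw [key]
    refine Finset.dvd_sum fun a _ => ?_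
    have h4 := hA a a
    have key2 : Y.val a a - (1 : Matrix (Fin n) (Fin n) (LaurentPolynomial ℤ)) a a -
        (tL - 1) ^ i * LaurentPolynomial.C (A a a)
        = (tL - 1) ^ i * (M a a - LaurentPolynomial.C (A a a)) := by
      rw [hM a a]; ring
    rw [key2] at h4
    exact pow_dvd_cancel h4
  have h5 : (tL - 1) ∣ LaurentPolynomial.C (Matrix.trace A) := by
    have key : LaurentPolynomial.C (Matrix.trace A)
        = Matrix.trace M - (Matrix.trace M - LaurentPolynomial.C (Matrix.trace A)) := by ring
    rw [key]
    exact dvd_sub htr hsum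
  exact eq_zero_of_dvd_C h5

open Matrix in
lemma good_off (a b : Fin n) (hab : a ≠ b) (c : ℤ) :
    ∃ Y ∈ KLau n i, sigmaRel n i Y (Matrix.single a b c) := by
  classical
  have hsig : sigmaRel n i ⟨transvection a b ((tL - 1) ^ i * LaurentPolynomial.C c),
      by rw [det_transvection_of_ne a b hab]⟩ (Matrix.single a b c) := by
    intro p q
    show (tL - 1) ^ (i + 1) ∣
      (transvection a b ((tL - 1) ^ i * LaurentPolynomial.C c)) p q - _ - _
    rw [Matrix.transvection, Matrix.add_apply]
    by_cases h : a = p ∧ b = q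
    · obtain ⟨rfl, rfl⟩ := h
      rw [Matrix.single_apply_same, Matrix.single_apply_same]
      simp [Matrix.one_apply_ne hab]
    · rw [Matrix.single_apply_of_ne _ _ _ _ _ h,
        Matrix.single_apply_of_ne _ _ _ _ _ h]
      simp
  exact ⟨_, sigmaRel_KLau hsig, hsig⟩

open Matrix in
set_option maxHeartbeats 4000000 in
lemma good_diag (hi : 1 ≤ i) (a b : Fin n) (hab : a ≠ b) (s : ℤ) :
    ∃ Y ∈ KLau n i, sigmaRel n i Y
      (s • (Matrix.single a a 1 - Matrix.single b b 1)) := by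
  classical
  obtain ⟨j, rfl⟩ : ∃ j, i = j + 1 := ⟨i - 1, by omega⟩
  have hdet : Matrix.det (transvection a b
        (LaurentPolynomial.C s * (tL - 1) ^ j * (1 + LaurentPolynomial.C s * (tL - 1) ^ (j+1))) *
      (transvection b a (tL - 1) * (transvection a b (-(LaurentPolynomial.C s * (tL - 1) ^ j)) *
        transvection b a (-((tL - 1) * (1 + LaurentPolynomial.C s * (tL - 1) ^ (j+1))))))) = 1 := by
    rw [Matrix.det_mul, Matrix.det_mul, Matrix.det_mul,
      det_transvection_of_ne a b hab, det_transvection_of_ne b a hab.symm,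
      det_transvection_of_ne a b hab, det_transvection_of_ne b a hab.symm]
    ring
  have hsig : sigmaRel n (j+1) ⟨_, hdet⟩
      (s • (Matrix.single a a 1 - Matrix.single b b 1)) := by
    intro p q
    show ((tL - 1) ^ (j+1+1)) ∣ (transvection a b
        (LaurentPolynomial.C s * (tL - 1) ^ j * (1 + LaurentPolynomial.C s * (tL - 1) ^ (j+1))) *
      (transvection b a (tL - 1) * (transvection a b (-(LaurentPolynomial.C s * (tL - 1) ^ j)) *
        transvection b a (-((tL - 1) * (1 + LaurentPolynomial.C s * (tL - 1) ^ (j+1))))))) p q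
        - _ - _
    rw [expand4 a b hab]
    simp only [Matrix.add_apply, Matrix.smul_apply, Matrix.sub_apply, smul_eq_mul,
      Matrix.one_apply, Matrix.single, Matrix.of_apply]
    by_cases hpa : a = p
    · subst hpa
      by_cases hqa : a = q
      · subst hqa
        simp only [eq_self_iff_true, and_true, true_and, and_self, hab, Ne.symm hab,
          and_false, false_and, if_true, if_false, ite_true, ite_false, sub_zero,
          zero_sub, mul_zero, zero_mul, mul_one, one_mul, add_zero, zero_add,
          map_zero, map_neg, mul_neg, neg_neg, sub_self, sub_neg_eq_add]
        exact ⟨(tL - 1) ^ j * ((LaurentPolynomial.C s) ^ 2 *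
          (1 + LaurentPolynomial.C s * (tL - 1) ^ (j+1)) ^ 2 -
          (LaurentPolynomial.C s) ^ 3 * (tL - 1) ^ (j+1)), by ring⟩
      · by_cases hqb : b = q
        · subst hqb
          simp only [eq_self_iff_true, and_true, true_and, and_self, hab, Ne.symm hab,
            hqa, and_false, false_and, if_true, if_false, ite_true, ite_false, sub_zero,
            zero_sub, mul_zero, zero_mul, mul_one, one_mul, add_zero, zero_add,
            map_zero, map_neg, mul_neg, neg_neg, sub_self, sub_neg_eq_add]
          exact ⟨-((LaurentPolynomial.C s) ^ 3 * (tL - 1) ^ (2*j)), by ring⟩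
        · simp only [eq_self_iff_true, and_true, true_and, and_self, hab, Ne.symm hab,
            hqa, hqb, and_false, false_and, if_true, if_false, ite_true, ite_false,
            sub_zero, zero_sub, mul_zero, zero_mul, mul_one, one_mul, add_zero, zero_add,
            map_zero, map_neg, mul_neg, neg_neg, sub_self, sub_neg_eq_add]
          exact ⟨0, by ring⟩
    · by_cases hpb : b = p
      · subst hpb
        by_cases hqa : a = q
        · subst hqa
          simp only [eq_self_iff_true, and_true, true_and, and_self, hab, Ne.symm hab,
            hpa, and_false, false_and, if_true, if_false, ite_true, ite_false, sub_zero,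
            zero_sub, mul_zero, zero_mul, mul_one, one_mul, add_zero, zero_add,
            map_zero, map_neg, mul_neg, neg_neg, sub_self, sub_neg_eq_add]
          exact ⟨(LaurentPolynomial.C s) ^ 2 * (tL - 1) ^ (j+1), by ring⟩
        · by_cases hqb : b = q
          · subst hqb
            simp only [eq_self_iff_true, and_true, true_and, and_self, hab, Ne.symm hab,
              hpa, hqa, and_false, false_and, if_true, if_false, ite_true, ite_false,
              sub_zero, zero_sub, mul_zero, zero_mul, mul_one, one_mul, add_zero,
              zero_add, map_zero, map_neg, mul_neg, neg_neg, sub_self, sub_neg_eq_add]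
            exact ⟨0, by ring⟩
          · simp only [eq_self_iff_true, and_true, true_and, and_self, hab, Ne.symm hab,
              hpa, hqa, hqb, and_false, false_and, if_true, if_false, ite_true,
              ite_false, sub_zero, zero_sub, mul_zero, zero_mul, mul_one, one_mul,
              add_zero, zero_add, map_zero, map_neg, mul_neg, neg_neg, sub_self,
              sub_neg_eq_add]
            exact ⟨0, by ring⟩
      · simp only [hpa, hpb, and_false, false_and, if_false, ite_false, sub_zero,
          zero_sub, mul_zero, zero_mul, add_zero, zero_add, map_zero, map_neg,
          mul_neg, neg_neg, sub_self, sub_neg_eq_add, false_and]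
        exact ⟨0, by ring⟩
  exact ⟨_, sigmaRel_KLau hsig, hsig⟩

open Matrix in
lemma decomp {n : ℕ} (b₀ : Fin n) (A : Matrix (Fin n) (Fin n) ℤ)
    (hA : Matrix.trace A = 0) :
    A = (∑ p, ∑ q ∈ Finset.univ.erase p, Matrix.single p q (A p q))
      + ∑ p ∈ Finset.univ.erase b₀, A p p •
          (Matrix.single p p 1 - Matrix.single b₀ b₀ 1) := by
  classical
  have htr : ∑ p, A p p = 0 := by simpa [Matrix.trace, Matrix.diag] using hA
  refine Matrix.ext fun r t => ?_
  simp only [Matrix.add_apply, Matrix.sum_apply, Matrix.smul_apply, Matrix.sub_apply,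
    smul_eq_mul]
  by_cases hrt : r = t
  · subst hrt
    have h1 : (∑ p, ∑ q ∈ Finset.univ.erase p, Matrix.single p q (A p q) r r) = 0 :=
      Finset.sum_eq_zero fun p _ => Finset.sum_eq_zero fun q hq =>
        Matrix.single_apply_of_ne _ _ _ _ _
          (by rintro ⟨rfl, rfl⟩; exact absurd hq (by simp))
    rw [h1, zero_add]
    by_cases hrb : r = b₀
    · subst hrb
      have h2 : ∀ p ∈ Finset.univ.erase r,
          A p p * (Matrix.single p p (1:ℤ) r r - Matrix.single r r (1:ℤ) r r)
            = -(A p p) := fun p hp => by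
        rw [Matrix.single_apply_of_ne _ _ _ _ _
            (by rintro ⟨rfl, -⟩; exact absurd hp (by simp)),
          Matrix.single_apply_same]
        ring
      rw [Finset.sum_congr rfl h2, Finset.sum_neg_distrib]
      have h3 : ∑ p ∈ Finset.univ.erase r, A p p + A r r = 0 := by
        rw [Finset.sum_erase_add Finset.univ _ (Finset.mem_univ r)]
        exact htr
      omega
    · have h2 : ∑ p ∈ Finset.univ.erase b₀,
          A p p * (Matrix.single p p (1:ℤ) r r - Matrix.single b₀ b₀ (1:ℤ) r r)
            = A r r := by
        rw [Finset.sum_eq_single_of_mem r (by simp [hrb])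
          (fun p _ hpr => by
            rw [Matrix.single_apply_of_ne _ _ _ _ _
                (by rintro ⟨rfl, -⟩; exact hpr rfl),
              Matrix.single_apply_of_ne _ _ _ _ _
                (by rintro ⟨rfl, -⟩; exact hrb rfl)]
            ring),
          Matrix.single_apply_same,
          Matrix.single_apply_of_ne _ _ _ _ _
            (by rintro ⟨rfl, -⟩; exact hrb rfl)]
        ring
      rw [h2]
  · have h2 : ∑ p ∈ Finset.univ.erase b₀,
        A p p * (Matrix.single p p (1:ℤ) r t - Matrix.single b₀ b₀ (1:ℤ) r t) = 0 :=
      Finset.sum_eq_zero fun p _ => by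
        rw [Matrix.single_apply_of_ne _ _ _ _ _
            (by rintro ⟨rfl, rfl⟩; exact hrt rfl),
          Matrix.single_apply_of_ne _ _ _ _ _
            (by rintro ⟨rfl, rfl⟩; exact hrt rfl)]
        ring
    have h1 : (∑ p, ∑ q ∈ Finset.univ.erase p, Matrix.single p q (A p q) r t) = A r t := by
      rw [Finset.sum_eq_single_of_mem r (Finset.mem_univ r)
        (fun p _ hpr => Finset.sum_eq_zero fun q _ =>
          Matrix.single_apply_of_ne p q (A p q) r t
            (by rintro ⟨rfl, -⟩; exact hpr rfl)),
        Finset.sum_eq_single_of_mem t (by simp [Ne.symm hrt])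
          (fun q _ hqt => Matrix.single_apply_of_ne r q (A r q) r t
            (by rintro ⟨-, rfl⟩; exact hqt rfl)),
        Matrix.single_apply_same]
    rw [h1, h2, add_zero]

lemma surj (hi : 1 ≤ i) (A : Matrix (Fin n) (Fin n) ℤ) (hA : Matrix.trace A = 0) :
    ∃ Y ∈ KLau n i, sigmaRel n i Y A := by
  classical
  rcases Nat.eq_zero_or_pos n with hn | hn
  · subst hn
    have : A = 0 := Subsingleton.elim _ _
    subst this
    exact ⟨1, KLau_one, sigma_one⟩
  · set b₀ : Fin n := ⟨0, hn⟩
    set S : AddSubmonoid (Matrix (Fin n) (Fin n) ℤ) :=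
      { carrier := {B | ∃ Y ∈ KLau n i, sigmaRel n i Y B}
        zero_mem' := ⟨1, KLau_one, sigma_one⟩
        add_mem' := by
          rintro B C ⟨Y, hY, hB⟩ ⟨Z, hZ, hC⟩
          exact ⟨Y * Z, KLau_mul hY hZ, sigma_hom hi hY hZ hB hC⟩ } with hS
    have hmem : A ∈ S := by
      rw [decomp b₀ A hA]
      refine AddSubmonoid.add_mem S ?_ ?_
      · refine AddSubmonoid.sum_mem S fun p _ => AddSubmonoid.sum_mem S fun q hq => ?_
        exact good_off p q (Ne.symm (Finset.ne_of_mem_erase hq)) _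
      · refine AddSubmonoid.sum_mem S fun p hp => ?_
        exact good_diag hi p b₀ (Finset.ne_of_mem_erase hp) _
    exact hmem

lemma sigma_ker {Y : SLL n} {A : Matrix (Fin n) (Fin n) ℤ} (h : sigmaRel n i Y A) :
    A = 0 ↔ Y ∈ KLau n (i + 1) := by
  constructor
  · rintro rfl
    intro a b
    have h1 := h a b
    simpa using h1
  · intro hK
    refine Matrix.ext fun a b => ?_
    have hd := dvd_sub (hK a b) (h a b)
    have key : (Y.val a b - (1 : Matrix (Fin n) (Fin n) (LaurentPolynomial ℤ)) a b) -
        (Y.val a b - (1 : Matrix (Fin n) (Fin n) (LaurentPolynomial ℤ)) a b -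
          (tL - 1) ^ i * LaurentPolynomial.C (A a b))
        = (tL - 1) ^ i * LaurentPolynomial.C (A a b) := by ring
    rw [key] at hd
    have := eq_zero_of_dvd_C (pow_dvd_cancel hd)
    simpa using this

lemma part1 (i : ℕ) : (tL - 1) ^ (i + 1) ∣
    ((LaurentPolynomial.T (-1 : ℤ) - 1) ^ i - (-1 : LaurentPolynomial ℤ) ^ i * (tL - 1) ^ i) := by
  have h0 : (T (-1:ℤ) - 1 : LaurentPolynomial ℤ) = -T (-1:ℤ) * (tL - 1) := by
    have hT : (T (-1:ℤ) : LaurentPolynomial ℤ) * T (1:ℤ) = 1 := by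
      rw [← T_add]; norm_num
    rw [tL, neg_mul, mul_sub, mul_one, hT]
    ring
  have key : (T (-1:ℤ) - 1 : LaurentPolynomial ℤ) ^ i
      - (-1 : LaurentPolynomial ℤ) ^ i * (tL - 1) ^ i
      = ((-1 : LaurentPolynomial ℤ) ^ i * (tL - 1) ^ i) * (T ((i:ℕ) * (-1:ℤ)) - 1) := by
    rw [h0, mul_pow, neg_pow, ← T_pow]
    ring
  rw [key, pow_succ]
  exact mul_dvd_mul (dvd_mul_left _ _) (dvd_T_sub_one _)

end Main
end St9

/-- For `Y ∈ K^i ⊆ SL_n(ℤ[t,t⁻¹])` one can write `Y ≡ I + (t-1)^i Y_i mod (t-1)^{i+1}`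
with `Y_i` a well-defined trace-zero integer matrix (using
`(t⁻¹-1)^i ≡ (-1)^i (t-1)^i mod (t-1)^{i+1}`), and `σ_i : Y ↦ Y_i` is a surjective
group homomorphism `K^i → sl_n(ℤ)` with kernel `K^{i+1}`. -/
theorem stmt9 (n i : ℕ) (hi : 1 ≤ i) :
    ((tL - 1) ^ (i + 1) ∣
      ((LaurentPolynomial.T (-1 : ℤ) - 1) ^ i - (-1 : LaurentPolynomial ℤ) ^ i * (tL - 1) ^ i)) ∧
    (∀ Y ∈ KLau n i, ∃! A : Matrix (Fin n) (Fin n) ℤ, sigmaRel n i Y A) ∧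
    (∀ Y ∈ KLau n i, ∀ A, sigmaRel n i Y A → Matrix.trace A = 0) ∧
    (∀ Y ∈ KLau n i, ∀ Z ∈ KLau n i, ∀ A B,
      sigmaRel n i Y A → sigmaRel n i Z B → sigmaRel n i (Y * Z) (A + B)) ∧
    (∀ A : Matrix (Fin n) (Fin n) ℤ, Matrix.trace A = 0 →
      ∃ Y ∈ KLau n i, sigmaRel n i Y A) ∧
    (∀ Y ∈ KLau n i, ∀ A, sigmaRel n i Y A → (A = 0 ↔ Y ∈ KLau n (i + 1))) := by
  refine ⟨St9.part1 i, ?_, ?_, ?_, ?_, ?_⟩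
  · intro Y hY
    obtain ⟨A, hA⟩ := St9.sigma_exists hY
    exact ⟨A, hA, fun B hB => St9.sigma_unique hB hA⟩
  · intro Y hY A hA
    exact St9.sigma_trace hi hY hA
  · intro Y hY Z hZ A B hA hB
    exact St9.sigma_hom hi hY hZ hA hB
  · intro A hA
    exact St9.surj hi A hA
  · intro Y _ A hA
    exact St9.sigma_ker hA
end

section
/- Let 𝒰 = ker(SL_n(ℚ[[T]]) → SL_n(ℚ)) with T-adic filtration 𝒰^r, and let K = ker(SL_n(ℤ[t]) → SL_n(ℤ)) included in 𝒰 via t ↦ T. For every X ∈ 𝒰/𝒰^r there exists a nonzero integer m such that X^m lies in the image of K/K^r → 𝒰/𝒰^r. -/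
abbrev SLZt (n : ℕ) := Matrix.SpecialLinearGroup (Fin n) (Polynomial ℤ)
abbrev SLQ (n : ℕ) := Matrix.SpecialLinearGroup (Fin n) (PowerSeries ℚ)

/-- `𝒰 = ker(SL_n(ℚ[[T]]) → SL_n(ℚ))`. -/
noncomputable def UU (n : ℕ) : Subgroup (SLQ n) :=
  (Matrix.SpecialLinearGroup.map (PowerSeries.constantCoeff : PowerSeries ℚ →+* ℚ)).ker

/-- `𝒰^r`, the kernel of reduction mod `T^r`. -/
noncomputable def Ur (n r : ℕ) : Subgroup (SLQ n) :=
  (Matrix.SpecialLinearGroup.map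
    (Ideal.Quotient.mk (Ideal.span {(PowerSeries.X : PowerSeries ℚ) ^ r}))).ker

/-- `K = ker(SL_n(ℤ[t]) → SL_n(ℤ))`. -/
noncomputable def Kker (n : ℕ) : Subgroup (SLZt n) :=
  (Matrix.SpecialLinearGroup.map (Polynomial.evalRingHom (0 : ℤ))).ker

/-- The inclusion `SL_n(ℤ[t]) → SL_n(ℚ[[T]])`, `t ↦ T`. -/
noncomputable def incl (n : ℕ) : SLZt n →* SLQ n :=
  Matrix.SpecialLinearGroup.map
    (Polynomial.eval₂RingHom (Int.castRingHom (PowerSeries ℚ)) PowerSeries.X)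

open Matrix PowerSeries





variable {n : ℕ}

noncomputable abbrev QRing (s : ℕ) : Type :=
  PowerSeries ℚ ⧸ (Ideal.span {(PowerSeries.X : PowerSeries ℚ) ^ s})

noncomputable abbrev mkQ (s : ℕ) : PowerSeries ℚ →+* QRing s :=
  Ideal.Quotient.mk _

noncomputable abbrev epsQ (r : ℕ) : QRing (r+1) := mkQ (r+1) (PowerSeries.X ^ r)

lemma kill {r : ℕ} {f : PowerSeries ℚ} (hf : PowerSeries.X ∣ f) :
    epsQ r * mkQ (r+1) f = 0 := by
  obtain ⟨g, rfl⟩ := hf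
  rw [← _root_.map_mul, Ideal.Quotient.eq_zero_iff_mem]
  have : (PowerSeries.X : PowerSeries ℚ)^r * (PowerSeries.X * g)
      = PowerSeries.X ^ (r+1) * g := by ring
  rw [this]
  exact Ideal.mul_mem_right _ _ (Ideal.mem_span_singleton_self _)

lemma eps_sq (r : ℕ) (hr : 1 ≤ r) : epsQ r * epsQ r = 0 :=
  kill (dvd_pow_self _ (by omega))

noncomputable abbrev rhoQ (r : ℕ) : Polynomial ℤ →+* QRing (r+1) :=
  (mkQ (r+1)).comp (Polynomial.eval₂RingHom (Int.castRingHom (PowerSeries ℚ)) PowerSeries.X)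

lemma incl_mat (r : ℕ) (Y : SLZt n) :
    ((Matrix.SpecialLinearGroup.map (mkQ (r+1))) ((incl n) Y)).1 = Y.1.map (rhoQ r) := by
  simp [incl, Matrix.SpecialLinearGroup.map_apply_coe, RingHom.mapMatrix_apply,
    Matrix.map_map]

lemma rho_mono (r : ℕ) (c : ℤ) :
    rhoQ r (Polynomial.C c * Polynomial.X ^ r) = (c : QRing (r+1)) * epsQ r := by
  have : (Polynomial.C c * Polynomial.X ^ r : Polynomial ℤ).eval₂
      (Int.castRingHom (PowerSeries ℚ)) PowerSeries.X
      = ((c : ℤ) : PowerSeries ℚ) * PowerSeries.X ^ r := by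
    rw [Polynomial.eval₂_mul, Polynomial.eval₂_C, Polynomial.eval₂_pow, Polynomial.eval₂_X]
    norm_num
  simp only [rhoQ, RingHom.comp_apply, Polynomial.coe_eval₂RingHom]
  rw [this, _root_.map_mul, map_intCast]

variable {S : Type*} [CommRing S] {n : ℕ}

/-- product of two `1 + ε•M` matrices with `ε² = 0`. -/
lemma one_add_smul_mul {ε : S} (hε : ε * ε = 0) (M N : Matrix (Fin n) (Fin n) S) :
    (1 + ε • M) * (1 + ε • N) = 1 + ε • (M + N) := by
  have h : (ε • M) * (ε • N) = 0 := by
    rw [Matrix.smul_mul, Matrix.mul_smul, smul_smul, hε, zero_smul]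
  rw [mul_add, add_mul, add_mul, mul_one, one_mul, h, smul_add, mul_one]
  abel

lemma one_add_smul_pow {ε : S} (hε : ε * ε = 0) (M : Matrix (Fin n) (Fin n) S) :
    ∀ k : ℕ, (1 + ε • M) ^ k = 1 + ε • (k • M)
  | 0 => by simp
  | (k+1) => by
    rw [pow_succ, one_add_smul_pow hε M k, one_add_smul_mul hε, succ_nsmul]

/-- the gadget identity. -/
lemma gadget {i j : Fin n} (hij : i ≠ j) {a : S} (ha : a * a = 0) :
    transvection i j a * transvection j i 1 * transvection i j (-a) * transvection j i (-1)
      * transvection j i (-a)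
      = 1 + Matrix.single i i a - Matrix.single j j a := by
  have hji := hij.symm
  simp only [transvection, Matrix.mul_add, Matrix.add_mul, one_mul, mul_one,
    Matrix.single_mul_single_same, Matrix.single_mul_single_of_ne _ _ _ _ hij,
    Matrix.single_mul_single_of_ne _ _ _ _ hji, mul_neg, neg_neg, mul_one, one_mul,
    ha, Matrix.single_zero, add_zero, zero_add, neg_mul, neg_zero]
  have hneg : ∀ (x y : Fin n) (c : S), Matrix.single x y (-c) = -Matrix.single x y c := by
    intro x y c
    rw [← neg_one_smul S c, ← Matrix.smul_single, neg_one_smul]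
  simp only [hneg]
  abel

lemma mem_ker_iff {R T : Type*} [CommRing R] [CommRing T] (f : R →+* T)
    (g : Matrix.SpecialLinearGroup (Fin n) R) :
    g ∈ (Matrix.SpecialLinearGroup.map (n := Fin n) f).ker
      ↔ ∀ i j, f (g.1 i j) = (1 : Matrix (Fin n) (Fin n) T) i j := by
  rw [MonoidHom.mem_ker, Matrix.SpecialLinearGroup.ext_iff]
  rfl

lemma map_transvection {R T : Type*} [CommRing R] [CommRing T] (f : R →+* T)
    (i j : Fin n) (c : R) :
    (transvection i j c).map f = transvection i j (f c) := by
  ext a b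
  simp only [transvection, Matrix.map_apply, Matrix.add_apply, Matrix.one_apply,
    Matrix.single, Matrix.of_apply]
  split_ifs <;> simp

lemma prod_form (r : ℕ) (hr : 1 ≤ r) {ι : Type*} (l : List ι) (g : ι → SLZt n)
    (M : ι → Matrix (Fin n) (Fin n) (QRing (r+1)))
    (h : ∀ p ∈ l, ((Matrix.SpecialLinearGroup.map (mkQ (r+1))) ((incl n) (g p))).1
        = 1 + epsQ r • M p) :
    ((Matrix.SpecialLinearGroup.map (mkQ (r+1))) ((incl n) ((l.map g).prod))).1
      = 1 + epsQ r • (l.map M).sum := by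
  induction l with
  | nil => simp
  | cons a l ih =>
    rw [List.map_cons, List.map_cons, List.prod_cons, List.sum_cons, _root_.map_mul,
      _root_.map_mul, Matrix.SpecialLinearGroup.coe_mul, h a List.mem_cons_self,
      ih (fun p hp => h p (List.mem_cons_of_mem a hp)), one_add_smul_mul (eps_sq r hr)]

noncomputable def TvSL {n : ℕ} (i j : Fin n) (h : i ≠ j) (p : Polynomial ℤ) : SLZt n :=
  ⟨Matrix.transvection i j p, Matrix.det_transvection_of_ne i j h p⟩

noncomputable def gFun (r : ℕ) (B : Matrix (Fin n) (Fin n) ℤ) (z0 : Fin n)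
    (p : Fin n × Fin n) : SLZt n :=
  if h : p.1 = p.2 then
    if h0 : p.1 = z0 then 1 else
      TvSL p.1 z0 h0 (Polynomial.C (B p.1 p.1) * Polynomial.X ^ r)
        * TvSL z0 p.1 (Ne.symm h0) 1
        * TvSL p.1 z0 h0 (-(Polynomial.C (B p.1 p.1) * Polynomial.X ^ r))
        * TvSL z0 p.1 (Ne.symm h0) (-1)
        * TvSL z0 p.1 (Ne.symm h0) (-(Polynomial.C (B p.1 p.1) * Polynomial.X ^ r))
  else TvSL p.1 p.2 h (Polynomial.C (B p.1 p.2) * Polynomial.X ^ r)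

noncomputable def MFun (r : ℕ) (B : Matrix (Fin n) (Fin n) ℤ) (z0 : Fin n)
    (p : Fin n × Fin n) : Matrix (Fin n) (Fin n) (QRing (r+1)) :=
  if p.1 = p.2 then
    Matrix.single p.1 p.1 ((B p.1 p.1 : QRing (r+1)))
      - Matrix.single z0 z0 ((B p.1 p.1 : QRing (r+1)))
  else Matrix.single p.1 p.2 ((B p.1 p.2 : QRing (r+1)))

lemma TvSL_eval (i j : Fin n) (h : i ≠ j) (q : Polynomial ℤ) :
    ((Matrix.SpecialLinearGroup.map (Polynomial.evalRingHom (0:ℤ))) (TvSL i j h q)).1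
      = Matrix.transvection i j (q.eval 0) := by
  rw [Matrix.SpecialLinearGroup.map_apply_coe, RingHom.mapMatrix_apply]
  exact map_transvection _ i j q

lemma transvection_zero' (i j : Fin n) {R : Type*} [CommRing R] :
    Matrix.transvection i j (0 : R) = 1 := by
  simp [Matrix.transvection]

lemma eval_monoP (r : ℕ) (hr : 1 ≤ r) (c : ℤ) :
    (Polynomial.C c * Polynomial.X ^ r).eval 0 = 0 := by
  simp [zero_pow (by omega : r ≠ 0)]

lemma gFun_mem (r : ℕ) (hr : 1 ≤ r) (B : Matrix (Fin n) (Fin n) ℤ) (z0 : Fin n)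
    (p : Fin n × Fin n) : gFun r B z0 p ∈ Kker n := by
  rw [Kker, MonoidHom.mem_ker]
  unfold gFun
  split_ifs with h h0
  · exact map_one _
  · apply Subtype.ext
    simp only [_root_.map_mul, Matrix.SpecialLinearGroup.coe_mul, TvSL_eval,
      Matrix.SpecialLinearGroup.coe_one, Polynomial.eval_neg, eval_monoP r hr,
      Polynomial.eval_one, neg_zero, transvection_zero', one_mul, mul_one]
    rw [Matrix.transvection_mul_transvection_same _ _ (Ne.symm h0), add_neg_cancel,
      transvection_zero']
  · apply Subtype.ext
    simp only [TvSL_eval, eval_monoP r hr, transvection_zero',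
      Matrix.SpecialLinearGroup.coe_one]

lemma smul_std {S : Type*} [CommRing S] (e : S) (i j : Fin n) (c : S) :
    e • Matrix.single i j c = Matrix.single i j (e * c) := by
  rw [Matrix.smul_single, smul_eq_mul]

lemma smul_std_sub {S : Type*} [CommRing S] (e : S) (i j k l : Fin n) (c : S) :
    e • (Matrix.single i j c - Matrix.single k l c)
      = Matrix.single i j (e * c) - Matrix.single k l (e * c) := by
  rw [smul_sub, smul_std, smul_std]

lemma TvSL_coe (i j : Fin n) (h : i ≠ j) (q : Polynomial ℤ) :
    (TvSL i j h q).1 = Matrix.transvection i j q := rfl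

lemma gFun_form (r : ℕ) (hr : 1 ≤ r) (B : Matrix (Fin n) (Fin n) ℤ) (z0 : Fin n)
    (p : Fin n × Fin n) :
    ((Matrix.SpecialLinearGroup.map (mkQ (r+1))) ((incl n) (gFun r B z0 p))).1
      = 1 + epsQ r • MFun r B z0 p := by
  rw [incl_mat]
  unfold gFun MFun
  split_ifs with h h0
  · simp only [h0, Matrix.SpecialLinearGroup.coe_one, sub_self, smul_zero, add_zero]
    exact Matrix.map_one _ (map_zero _) (_root_.map_one _)
  · have ha : ((B p.1 p.1 : QRing (r+1)) * epsQ r) * ((B p.1 p.1 : QRing (r+1)) * epsQ r) = 0 := by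
      rw [mul_mul_mul_comm, eps_sq r hr, mul_zero]
    simp only [Matrix.SpecialLinearGroup.coe_mul, TvSL_coe, Matrix.map_mul,
      map_transvection, map_neg, _root_.map_one, rho_mono]
    rw [gadget h0 ha, smul_std_sub, mul_comm (epsQ r), ← add_sub_assoc]
  · simp only [TvSL_coe, map_transvection, rho_mono]
    show (1 : Matrix (Fin n) (Fin n) (QRing (r+1)))
        + Matrix.single p.1 p.2 ((B p.1 p.2 : QRing (r+1)) * epsQ r) = _
    rw [smul_std, mul_comm (epsQ r)]

lemma sum_std {S : Type*} [CommRing S] (k l : Fin n) (f : Fin n → S) :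
    ∑ i, Matrix.single k l (f i) = Matrix.single k l (∑ i, f i) := by
  classical
  induction (Finset.univ : Finset (Fin n)) using Finset.cons_induction with
  | empty => simp
  | cons a s ha ih => rw [Finset.sum_cons, Finset.sum_cons, Matrix.single_add, ih]

lemma MFun_sum (r : ℕ) (B : Matrix (Fin n) (Fin n) ℤ) (z0 : Fin n) (htr : B.trace = 0) :
    ∑ p : Fin n × Fin n, MFun r B z0 p = B.map (Int.cast : ℤ → QRing (r+1)) := by
  have hM : ∀ p : Fin n × Fin n, MFun r B z0 p
      = Matrix.single p.1 p.2 ((B p.1 p.2 : QRing (r+1)))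
        + (if p.1 = p.2 then -Matrix.single z0 z0 ((B p.1 p.1 : QRing (r+1))) else 0) := by
    intro p
    unfold MFun
    split_ifs with h
    · rw [← h, sub_eq_add_neg]
    · rw [add_zero]
  simp only [hM]
  rw [Finset.sum_add_distrib]
  have h1 : ∑ p : Fin n × Fin n, Matrix.single p.1 p.2 ((B p.1 p.2 : QRing (r+1)))
      = B.map (Int.cast : ℤ → QRing (r+1)) := by
    rw [Fintype.sum_prod_type]
    exact (Matrix.matrix_eq_sum_single _).symm
  have h2 : ∑ p : Fin n × Fin n,
      (if p.1 = p.2 then -Matrix.single z0 z0 ((B p.1 p.1 : QRing (r+1))) else 0) = 0 := by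
    rw [Fintype.sum_prod_type]
    have : ∀ i : Fin n, ∑ j : Fin n,
        (if i = j then -Matrix.single z0 z0 ((B i i : QRing (r+1))) else 0)
          = -Matrix.single z0 z0 ((B i i : QRing (r+1))) := by
      intro i
      simp
    rw [Finset.sum_congr rfl (fun i _ => this i), Finset.sum_neg_distrib, sum_std,
      ← Int.cast_sum]
    have : ∑ i : Fin n, B i i = B.trace := rfl
    rw [this, htr, Int.cast_zero, Matrix.single_zero, neg_zero]
  rw [h1, h2, add_zero]

lemma build (r : ℕ) (hr : 1 ≤ r) (B : Matrix (Fin n) (Fin n) ℤ) (htr : B.trace = 0) :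
    ∃ Y ∈ Kker n, ((Matrix.SpecialLinearGroup.map (mkQ (r+1))) ((incl n) Y)).1
      = 1 + epsQ r • B.map (Int.cast : ℤ → QRing (r+1)) := by
  rcases Nat.eq_zero_or_pos n with hn | hn
  · subst hn
    refine ⟨1, one_mem _, ?_⟩
    apply Subsingleton.elim
  · set z0 : Fin n := ⟨0, hn⟩
    refine ⟨((Finset.univ : Finset (Fin n × Fin n)).toList.map (gFun r B z0)).prod, ?_, ?_⟩
    · refine list_prod_mem ?_
      intro x hx
      obtain ⟨p, _, rfl⟩ := List.mem_map.1 hx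
      exact gFun_mem r hr B z0 p
    · rw [prod_form r hr _ _ (MFun r B z0) (fun p _ => gFun_form r hr B z0 p),
        Finset.sum_map_toList, MFun_sum r B z0 htr]



lemma one_entry_mk (s : ℕ) (i j : Fin n) :
    ((1 : Matrix (Fin n) (Fin n) (QRing s)) i j)
      = mkQ s ((1 : Matrix (Fin n) (Fin n) (PowerSeries ℚ)) i j) := by
  by_cases h : i = j <;> simp [Matrix.one_apply, h]

lemma ker_entries {s : ℕ} (Z : SLQ n) (hZ : Z ∈ Ur n s) (i j : Fin n) :
    (PowerSeries.X : PowerSeries ℚ)^s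
      ∣ (Z.1 i j - (1 : Matrix (Fin n) (Fin n) (PowerSeries ℚ)) i j) := by
  rw [Ur, mem_ker_iff] at hZ
  rw [← Ideal.mem_span_singleton, ← Ideal.Quotient.eq_zero_iff_mem, map_sub,
    ← one_entry_mk s i j, hZ i j, sub_self]

lemma incl_coe (Y : SLZt n) (i j : Fin n) :
    (incl n Y).1 i j = Polynomial.eval₂ (Int.castRingHom (PowerSeries ℚ))
      PowerSeries.X (Y.1 i j) := rfl

lemma incl_mem_UU {Y : SLZt n} (hY : Y ∈ Kker n) : incl n Y ∈ UU n := by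
  rw [Kker, mem_ker_iff] at hY
  rw [UU, mem_ker_iff]
  intro i j
  rw [incl_coe, Polynomial.hom_eval₂, PowerSeries.constantCoeff_X,
    Polynomial.eval₂_at_zero, Polynomial.coeff_zero_eq_eval_zero]
  have h1 := hY i j
  simp only [Polynomial.coe_evalRingHom] at h1
  rw [h1]
  by_cases h : i = j <;> simp [Matrix.one_apply, h]

lemma form_lemma (r : ℕ) (hr : 1 ≤ r) (Z : SLQ n) (hZ : Z ∈ Ur n r) :
    ((Matrix.SpecialLinearGroup.map (mkQ (r+1))) Z).1
      = 1 + epsQ r • (Matrix.of fun i j => (PowerSeries.coeff r (Z.1 i j))).map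
          (fun q => mkQ (r+1) (PowerSeries.C q)) := by
  ext i j
  obtain ⟨g, hg⟩ := ker_entries Z hZ i j
  have hZij : Z.1 i j = (1 : Matrix (Fin n) (Fin n) (PowerSeries ℚ)) i j
      + PowerSeries.X ^ r * g := by rw [← hg]; ring
  have hcoeff : PowerSeries.coeff r (Z.1 i j) = PowerSeries.constantCoeff g := by
    rw [hZij, map_add]
    have h1 : PowerSeries.coeff r ((1 : Matrix (Fin n) (Fin n) (PowerSeries ℚ)) i j) = 0 := by
      have hr0 : r ≠ 0 := by omega
      by_cases h : i = j <;>
        simp [Matrix.one_apply, h, PowerSeries.coeff_one, hr0]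
    have h2 : PowerSeries.coeff r (PowerSeries.X ^ r * g)
        = PowerSeries.coeff 0 g := by
      have := PowerSeries.coeff_X_pow_mul g r 0
      rwa [zero_add] at this
    rw [h1, h2, zero_add, PowerSeries.coeff_zero_eq_constantCoeff]
  have hmk : mkQ (r+1) (Z.1 i j)
      = mkQ (r+1) ((1 : Matrix (Fin n) (Fin n) (PowerSeries ℚ)) i j)
        + epsQ r * mkQ (r+1) (PowerSeries.C (PowerSeries.constantCoeff g)) := by
    rw [hZij, map_add]
    congr 1
    have hsplit : (PowerSeries.X : PowerSeries ℚ) ^ r * g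
        = PowerSeries.X ^ r * PowerSeries.C (PowerSeries.constantCoeff g)
          + PowerSeries.X ^ r * (g - PowerSeries.C (PowerSeries.constantCoeff g)) := by
      ring
    rw [hsplit, map_add, ← _root_.map_mul]
    have hkill2 : epsQ r * mkQ (r+1) (g - PowerSeries.C (PowerSeries.constantCoeff g)) = 0 := by
      apply kill
      rw [PowerSeries.X_dvd_iff, map_sub, PowerSeries.constantCoeff_C, sub_self]
    have : mkQ (r+1) ((PowerSeries.X : PowerSeries ℚ)^r * (g - PowerSeries.C (PowerSeries.constantCoeff g))) = 0 := by
      rw [_root_.map_mul]; exact hkill2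
    rw [this, add_zero, _root_.map_mul]
  show mkQ (r+1) (Z.1 i j) = _
  rw [hmk, Matrix.add_apply, Matrix.smul_apply, Matrix.map_apply, Matrix.of_apply,
    one_entry_mk, hcoeff, smul_eq_mul]

lemma trace_zero (r : ℕ) (hr : 1 ≤ r) (Z : SLQ n) (hZ : Z ∈ Ur n r) :
    (Matrix.of fun i j => (PowerSeries.coeff r (Z.1 i j))).trace = 0 := by
  set Aq := Matrix.of fun i j => (PowerSeries.coeff r (Z.1 i j)) with hAq
  set f : ℚ → QRing (r+1) := fun q => mkQ (r+1) (PowerSeries.C q) with hf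
  have hdet : ((Matrix.SpecialLinearGroup.map (mkQ (r+1))) Z).1.det = 1 :=
    Matrix.SpecialLinearGroup.det_coe _
  rw [form_lemma r hr Z hZ, Matrix.det_one_add_smul] at hdet
  have hsq : (epsQ r) ^ 2 = 0 := by rw [pow_two]; exact eps_sq r hr
  rw [hsq, mul_zero, add_zero] at hdet
  have htr : (Aq.map f).trace = f Aq.trace := by
    simp only [Matrix.trace, Matrix.diag, Matrix.map_apply, hf]
    rw [← map_sum, ← map_sum]
  have h0 : f Aq.trace * epsQ r = 0 := by
    have := hdet
    rw [htr] at this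
    linear_combination this - 1
  -- deduce Aq.trace = 0
  have hmem : PowerSeries.C Aq.trace * PowerSeries.X ^ r
      ∈ Ideal.span {(PowerSeries.X : PowerSeries ℚ) ^ (r+1)} := by
    rw [← Ideal.Quotient.eq_zero_iff_mem, _root_.map_mul]
    exact h0
  rw [Ideal.mem_span_singleton] at hmem
  have hc := PowerSeries.X_pow_dvd_iff.1 hmem r (by omega)
  rw [PowerSeries.coeff_C_mul] at hc
  simp [PowerSeries.coeff_X_pow] at hc
  exact hc

lemma central (r : ℕ) (hr : 1 ≤ r) (Z W : SLQ n) (hZ : Z ∈ Ur n r) (hW : W ∈ UU n) :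
    Commute ((Matrix.SpecialLinearGroup.map (mkQ (r+1))) W)
      ((Matrix.SpecialLinearGroup.map (mkQ (r+1))) Z) := by
  have hWent : ∀ i j, epsQ r * (((Matrix.SpecialLinearGroup.map (mkQ (r+1))) W).1 i j
      - (1 : Matrix (Fin n) (Fin n) (QRing (r+1))) i j) = 0 := by
    intro i j
    have h1 : ((Matrix.SpecialLinearGroup.map (mkQ (r+1))) W).1 i j = mkQ (r+1) (W.1 i j) := rfl
    rw [h1, one_entry_mk, ← map_sub]
    apply kill
    rw [PowerSeries.X_dvd_iff, map_sub]
    rw [UU, mem_ker_iff] at hW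
    have h2 : PowerSeries.constantCoeff ((1 : Matrix (Fin n) (Fin n) (PowerSeries ℚ)) i j)
        = (1 : Matrix (Fin n) (Fin n) ℚ) i j := by
      by_cases h : i = j <;> simp [Matrix.one_apply, h]
    rw [hW i j, h2, sub_self]
  unfold Commute SemiconjBy
  apply Subtype.ext
  rw [Matrix.SpecialLinearGroup.coe_mul, Matrix.SpecialLinearGroup.coe_mul]
  set w := ((Matrix.SpecialLinearGroup.map (mkQ (r+1))) W).1
  set M := (Matrix.of fun i j => (PowerSeries.coeff r (Z.1 i j))).map
      (fun q => mkQ (r+1) (PowerSeries.C q))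
  have hz : ((Matrix.SpecialLinearGroup.map (mkQ (r+1))) Z).1 = 1 + epsQ r • M :=
    form_lemma r hr Z hZ
  set C := w - 1 with hC
  have hw : w = 1 + C := by rw [hC]; abel
  have e1 : C * (epsQ r • M) = 0 := by
    ext i j
    rw [Matrix.mul_apply, Matrix.zero_apply]
    apply Finset.sum_eq_zero
    intro k _
    have h := hWent i k
    rw [mul_comm] at h
    simp only [hC, Matrix.sub_apply, Matrix.smul_apply, smul_eq_mul]
    rw [← mul_assoc, h, zero_mul]
  have e2 : (epsQ r • M) * C = 0 := by
    ext i j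
    rw [Matrix.mul_apply, Matrix.zero_apply]
    apply Finset.sum_eq_zero
    intro k _
    have h := hWent k j
    simp only [hC, Matrix.sub_apply, Matrix.smul_apply, smul_eq_mul]
    rw [mul_assoc, mul_comm (M i k), ← mul_assoc, h, zero_mul]
  rw [hz, hw]
  simp only [mul_add, add_mul, one_mul, mul_one, e1, e2]
  abel


/-- Every element of `𝒰/𝒰^r` has a nonzero power lying in the image of
`K/K^r → 𝒰/𝒰^r`. -/
theorem stmt12 (n r : ℕ) (X : SLQ n) (hX : X ∈ UU n) :
    ∃ m : ℤ, m ≠ 0 ∧ ∃ Y ∈ Kker n, X ^ m * (incl n Y)⁻¹ ∈ Ur n r := by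
  induction r with
  | zero =>
    refine ⟨1, one_ne_zero, 1, one_mem _, ?_⟩
    haveI hss : Subsingleton (QRing 0) := by
      constructor
      intro a b
      obtain ⟨x, rfl⟩ := Ideal.Quotient.mk_surjective a
      obtain ⟨y, rfl⟩ := Ideal.Quotient.mk_surjective b
      rw [Ideal.Quotient.eq, Ideal.mem_span_singleton, pow_zero]
      exact one_dvd _
    rw [Ur, mem_ker_iff]
    intro i j
    exact Subsingleton.elim _ _
  | succ r ih =>
    obtain ⟨m₀, hm₀, Y₀, hY₀, hZmem⟩ := ih
    rcases Nat.eq_zero_or_pos r with rfl | hr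
    · -- target is Ur n 1
      refine ⟨1, one_ne_zero, 1, one_mem _, ?_⟩
      simp only [zpow_one, _root_.map_one, inv_one, mul_one]
      rw [Ur, mem_ker_iff]
      intro i j
      rw [UU, mem_ker_iff] at hX
      have hd : (PowerSeries.X : PowerSeries ℚ) ^ (0+1)
          ∣ (X.1 i j - (1 : Matrix (Fin n) (Fin n) (PowerSeries ℚ)) i j) := by
        rw [zero_add, pow_one, PowerSeries.X_dvd_iff, map_sub, hX i j]
        have h2 : PowerSeries.constantCoeff ((1 : Matrix (Fin n) (Fin n) (PowerSeries ℚ)) i j)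
            = (1 : Matrix (Fin n) (Fin n) ℚ) i j := by
          by_cases h : i = j <;> simp [Matrix.one_apply, h]
        rw [h2, sub_self]
      have : mkQ (0+1) (X.1 i j - (1 : Matrix (Fin n) (Fin n) (PowerSeries ℚ)) i j) = 0 := by
        rw [Ideal.Quotient.eq_zero_iff_mem, Ideal.mem_span_singleton]
        exact hd
      rw [map_sub] at this
      have hone := one_entry_mk (n := n) (0+1) i j
      show mkQ (0+1) (X.1 i j) = _
      rw [hone]
      linear_combination this
    · -- main induction step
      set φ := Matrix.SpecialLinearGroup.map (n := Fin n) (mkQ (r+1)) with hφ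
      set Z := X ^ m₀ * (incl n Y₀)⁻¹ with hZdef
      have hZU : Z ∈ UU n := mul_mem (zpow_mem hX m₀) (inv_mem (incl_mem_UU hY₀))
      set Aq : Matrix (Fin n) (Fin n) ℚ :=
        Matrix.of fun i j => PowerSeries.coeff r (Z.1 i j) with hAqdef
      have hform := form_lemma r hr Z hZmem
      have htrA : Aq.trace = 0 := trace_zero r hr Z hZmem
      set d : ℕ := ∏ i : Fin n, ∏ j : Fin n, (Aq i j).den with hd
      have hdpos : 0 < d :=
        Finset.prod_pos fun i _ => Finset.prod_pos fun j _ => (Aq i j).pos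
      have hBex : ∀ i j, ∃ z : ℤ, (z : ℚ) = (d : ℚ) * Aq i j := by
        intro i j
        have hdvd : ((Aq i j).den : ℤ) ∣ (d : ℤ) := by
          have : (Aq i j).den ∣ d := by
            refine dvd_trans (Finset.dvd_prod_of_mem (fun j => (Aq i j).den) (Finset.mem_univ j)) ?_
            exact Finset.dvd_prod_of_mem (fun i => ∏ j : Fin n, (Aq i j).den) (Finset.mem_univ i)
          exact_mod_cast this
        obtain ⟨c, hc⟩ := hdvd
        refine ⟨c * (Aq i j).num, ?_⟩
        have hden : ((Aq i j).den : ℚ) ≠ 0 := by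
          exact_mod_cast (Aq i j).pos.ne'
        have hdQ : (d : ℚ) = ((Aq i j).den : ℚ) * (c : ℚ) := by exact_mod_cast hc
        rw [hdQ]
        have h2 : Aq i j * ((Aq i j).den : ℚ) = ((Aq i j).num : ℚ) :=
          Rat.mul_den_eq_num (Aq i j)
        push_cast
        linear_combination (-(c : ℚ)) * h2
      choose B hB using hBex
      have htrB : (Matrix.of B).trace = 0 := by
        have hcast : (((Matrix.of B).trace : ℤ) : ℚ) = (d : ℚ) * Aq.trace := by
          simp only [Matrix.trace, Matrix.diag, Matrix.of_apply]
          push_cast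
          rw [Finset.mul_sum]
          exact Finset.sum_congr rfl fun i _ => hB i i
        rw [htrA, mul_zero] at hcast
        exact_mod_cast hcast
      obtain ⟨Y₁, hY₁K, hY₁form⟩ := build r hr (Matrix.of B) htrB
      have hmap : (Matrix.of B).map (Int.cast : ℤ → QRing (r+1))
          = d • (Aq.map (fun q => mkQ (r+1) (PowerSeries.C q))) := by
        ext i j
        rw [Matrix.map_apply, Matrix.smul_apply, Matrix.map_apply, Matrix.of_apply]
        set F : ℚ →+* QRing (r+1) := (mkQ (r+1)).comp (PowerSeries.C (R := ℚ)) with hF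
        have h1 : ((B i j : ℤ) : QRing (r+1)) = F ((B i j : ℤ) : ℚ) := by
          rw [map_intCast]
        rw [h1, hB i j, _root_.map_mul, map_natCast, nsmul_eq_mul]
        rfl
      have hφZpow : (φ (Z ^ d)).1 = 1 + epsQ r • (d • (Aq.map (fun q => mkQ (r+1) (PowerSeries.C q)))) := by
        rw [map_pow, Matrix.SpecialLinearGroup.coe_pow, hform,
          one_add_smul_pow (eps_sq r hr)]
      have hkey : φ (Z ^ d) = φ ((incl n) Y₁) := by
        apply Subtype.ext
        rw [hφZpow, hY₁form, hmap]
      refine ⟨m₀ * d, mul_ne_zero hm₀ (by exact_mod_cast hdpos.ne'), Y₁ * Y₀ ^ (d : ℤ),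
        mul_mem hY₁K (zpow_mem hY₀ _), ?_⟩
      rw [Ur, MonoidHom.mem_ker]
      have hgoal : φ (X ^ (m₀ * (d : ℤ)) * ((incl n) (Y₁ * Y₀ ^ (d : ℤ)))⁻¹) = 1 := by
        rw [_root_.map_mul, map_inv, _root_.map_mul, map_zpow, map_zpow, _root_.map_mul]
        have hcomm : Commute (φ ((incl n) Y₀)) (φ Z) :=
          central r hr Z ((incl n) Y₀) hZmem (incl_mem_UU hY₀)
        have hXZ : φ X ^ (m₀ : ℤ) = φ Z * φ ((incl n) Y₀) := by
          rw [hZdef, _root_.map_mul, map_zpow, map_inv, inv_mul_cancel_right]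
        have hXpow : φ X ^ (m₀ * (d : ℤ)) = φ (Z ^ d) * φ ((incl n) Y₀) ^ (d : ℤ) := by
          rw [_root_.zpow_mul, hXZ, hcomm.symm.mul_zpow, map_pow, ← zpow_natCast (φ Z) d]
        rw [hXpow, hkey, map_zpow]
        group
      exact hgoal
end

section
/- For n ≥ 3, the lower central series of K̄ = ker(SL_n(ℤ[[T]]) → SL_n(ℤ)) coincides with its T-adic congruence filtration: Γ^r K̄ = K̄^r = {X ∈ K̄ : X ≡ I mod T^r} for all r ≥ 1. -/
abbrev SLZT (n : ℕ) := Matrix.SpecialLinearGroup (Fin n) (PowerSeries ℤ)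

/-- `K̄ = ker(SL_n(ℤ[[T]]) → SL_n(ℤ))`, evaluation at `T = 0`. -/
noncomputable def Kbar (n : ℕ) : Subgroup (SLZT n) :=
  (Matrix.SpecialLinearGroup.map (PowerSeries.constantCoeff (R := ℤ))).ker

/-- `K̄^r = {X : X ≡ I mod T^r}`, the kernel of reduction mod `T^r`. -/
noncomputable def KbarCong (n r : ℕ) : Subgroup (SLZT n) :=
  (Matrix.SpecialLinearGroup.map
    (Ideal.Quotient.mk (Ideal.span {(PowerSeries.X : PowerSeries ℤ) ^ r}))).ker

namespace Stmt14

open PowerSeries Matrix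
open scoped commutatorElement

local notation "R" => PowerSeries ℤ
local notation "TT" => (PowerSeries.X : PowerSeries ℤ)

variable {n : ℕ}

lemma mem_cong_iff {m : ℕ} {x : SLZT n} :
    x ∈ KbarCong n m ↔ ∀ i j, TT ^ m ∣ ((x.1 - 1) i j) := by
  constructor
  · intro hx i j
    have h1 : Matrix.SpecialLinearGroup.map
        (Ideal.Quotient.mk (Ideal.span {TT ^ m})) x = 1 := hx
    have h2 : (x.1).map (Ideal.Quotient.mk (Ideal.span {TT ^ m})) = 1 :=
      congrArg Subtype.val h1
    have h3 := congrFun (congrFun h2 i) j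
    simp only [Matrix.map_apply] at h3
    rw [← Ideal.mem_span_singleton]
    have : (Ideal.Quotient.mk (Ideal.span {TT ^ m})) ((1 : Matrix (Fin n) (Fin n) R) i j)
        = (1 : Matrix (Fin n) (Fin n) (R ⧸ Ideal.span {TT ^ m})) i j := by
      by_cases h : i = j <;> simp [Matrix.one_apply, h]
    rw [Matrix.sub_apply]
    rw [← Ideal.Quotient.eq_zero_iff_mem, map_sub, h3, this, sub_self]
  · intro h
    have : (x.1).map (Ideal.Quotient.mk (Ideal.span {TT ^ m})) = 1 := by
      ext i j
      have hd := h i j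
      rw [← Ideal.mem_span_singleton, Matrix.sub_apply] at hd
      have : (Ideal.Quotient.mk (Ideal.span {TT ^ m})) (x.1 i j) =
          (Ideal.Quotient.mk (Ideal.span {TT ^ m})) ((1 : Matrix (Fin n) (Fin n) R) i j) :=
        (Ideal.Quotient.mk_eq_mk_iff_sub_mem _ _).mpr hd
      rw [Matrix.map_apply, this]
      by_cases hij : i = j <;> simp [Matrix.one_apply, hij]
    exact Subtype.ext this

lemma mem_Kbar_iff {x : SLZT n} :
    x ∈ Kbar n ↔ ∀ i j, TT ∣ ((x.1 - 1) i j) := by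
  constructor
  · intro hx i j
    have h2 : (x.1).map ((PowerSeries.constantCoeff : PowerSeries ℤ →+* ℤ)) = 1 := congrArg Subtype.val hx
    have h3 := congrFun (congrFun h2 i) j
    simp only [Matrix.map_apply] at h3
    rw [PowerSeries.X_dvd_iff, Matrix.sub_apply, map_sub, h3]
    by_cases h : i = j <;> simp [Matrix.one_apply, h]
  · intro h
    have : (x.1).map ((PowerSeries.constantCoeff : PowerSeries ℤ →+* ℤ)) = 1 := by
      ext i j
      have hd := h i j
      rw [PowerSeries.X_dvd_iff, Matrix.sub_apply, map_sub] at hd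
      have h1 : (PowerSeries.constantCoeff : PowerSeries ℤ →+* ℤ) (x.1 i j)
          = (PowerSeries.constantCoeff : PowerSeries ℤ →+* ℤ) ((1 : Matrix (Fin n) (Fin n) R) i j) := by
        linarith [hd]
      rw [Matrix.map_apply, h1]
      by_cases hij : i = j <;> simp [Matrix.one_apply, hij]
    exact Subtype.ext this

lemma cong_mono {a b : ℕ} (h : a ≤ b) : KbarCong n b ≤ KbarCong n a := by
  intro x hx
  rw [mem_cong_iff] at hx ⊢
  exact fun i j => dvd_trans (pow_dvd_pow _ h) (hx i j)

lemma cong_one_eq_Kbar : KbarCong n 1 = Kbar n := by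
  ext x
  rw [mem_cong_iff, mem_Kbar_iff]
  simp

/-- Reduction mod `T^m` as a group hom on `SL_n`. -/
noncomputable def phi (n m : ℕ) :=
  Matrix.SpecialLinearGroup.map (n := Fin n)
    (Ideal.Quotient.mk (Ideal.span {(PowerSeries.X : PowerSeries ℤ) ^ m}))

lemma mem_cong_iff_phi {m : ℕ} {x : SLZT n} : x ∈ KbarCong n m ↔ phi n m x = 1 :=
  Iff.rfl

lemma phi_eq_of_dvd {m : ℕ} {x y : SLZT n}
    (h : ∀ i j, TT ^ m ∣ ((x.1 - y.1) i j)) : phi n m x = phi n m y := by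
  apply Subtype.ext
  ext i j
  show (Ideal.Quotient.mk _) (x.1 i j) = (Ideal.Quotient.mk _) (y.1 i j)
  rw [Ideal.Quotient.mk_eq_mk_iff_sub_mem, Ideal.mem_span_singleton]
  simpa [Matrix.sub_apply] using h i j

lemma mul_inv_mem_of_dvd {m : ℕ} {x y : SLZT n}
    (h : ∀ i j, TT ^ m ∣ ((x.1 - y.1) i j)) : x * y⁻¹ ∈ KbarCong n m := by
  rw [mem_cong_iff_phi, _root_.map_mul, map_inv, phi_eq_of_dvd h, mul_inv_cancel]

lemma dvd_entries_mul {a b : ℕ} {P Q : Matrix (Fin n) (Fin n) R}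
    (hP : ∀ i j, TT ^ a ∣ P i j) (hQ : ∀ i j, TT ^ b ∣ Q i j) :
    ∀ i j, TT ^ (a + b) ∣ (P * Q) i j := by
  intro i j
  rw [Matrix.mul_apply]
  apply Finset.dvd_sum
  intro k _
  rw [pow_add]
  exact mul_dvd_mul (hP i k) (hQ k j)

lemma commutator_mem_cong {a b : ℕ} {x y : SLZT n}
    (hx : x ∈ KbarCong n a) (hy : y ∈ KbarCong n b) :
    ⁅x, y⁆ ∈ KbarCong n (a + b) := by
  rw [mem_cong_iff] at hx hy
  rw [mem_cong_iff_phi, map_commutatorElement, commutatorElement_eq_one_iff_mul_comm,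
    ← _root_.map_mul, ← _root_.map_mul]
  apply phi_eq_of_dvd
  have key : (x * y).1 - (y * x).1 =
      (x.1 - 1) * (y.1 - 1) - (y.1 - 1) * (x.1 - 1) := by
    show x.1 * y.1 - y.1 * x.1 = _
    noncomm_ring
  intro i j
  rw [key, Matrix.sub_apply]
  refine dvd_sub (dvd_entries_mul hx hy i j) ?_
  rw [add_comm a b]
  exact dvd_entries_mul hy hx i j

lemma coeff_eq_zero_of_dvd {m k : ℕ} {f : R} (h : TT ^ m ∣ f) (hk : k < m) :
    PowerSeries.coeff k f = 0 :=
  PowerSeries.X_pow_dvd_iff.mp h k hk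

/-- The level-`s` residue of an element of `K̄^s`. -/
noncomputable def res (s : ℕ) (x : SLZT n) : Matrix (Fin n) (Fin n) ℤ :=
  fun i j => PowerSeries.coeff s ((x.1 - 1) i j)

lemma res_one (s : ℕ) : res s (1 : SLZT n) = 0 := by
  funext i j
  simp [res]

lemma mem_cong_succ_iff {s : ℕ} {x : SLZT n} (hx : x ∈ KbarCong n s) :
    x ∈ KbarCong n (s + 1) ↔ res s x = 0 := by
  rw [mem_cong_iff] at hx ⊢
  constructor
  · intro h
    funext i j
    exact coeff_eq_zero_of_dvd (h i j) (Nat.lt_succ_self s)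
  · intro h i j
    rw [PowerSeries.X_pow_dvd_iff]
    intro k hk
    rcases Nat.lt_or_ge k s with hks | hks
    · exact coeff_eq_zero_of_dvd (hx i j) hks
    · have : k = s := by omega
      subst this
      exact congrFun (congrFun h i) j

lemma res_mul {s : ℕ} (hs : 1 ≤ s) {x y : SLZT n}
    (hx : x ∈ KbarCong n s) (hy : y ∈ KbarCong n s) :
    res s (x * y) = res s x + res s y := by
  rw [mem_cong_iff] at hx hy
  funext i j
  have key : ((x * y).1 - 1) = ((x.1 - 1) + (y.1 - 1)) + (x.1 - 1) * (y.1 - 1) := by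
    show x.1 * y.1 - 1 = _
    noncomm_ring
  have hz : PowerSeries.coeff s (((x.1 - 1) * (y.1 - 1)) i j) = 0 := by
    refine coeff_eq_zero_of_dvd (dvd_entries_mul hx hy i j) ?_
    omega
  simp only [res, key, Matrix.add_apply, map_add, hz, add_zero]

lemma res_inv {s : ℕ} (hs : 1 ≤ s) {x : SLZT n} (hx : x ∈ KbarCong n s) :
    res s x⁻¹ = - res s x := by
  have h := res_mul hs hx ((KbarCong n s).inv_mem hx)
  rw [mul_inv_cancel, res_one] at h
  have := h.symm
  funext i j
  have h2 := congrFun (congrFun this i) j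
  simp only [Matrix.add_apply, Matrix.zero_apply, Matrix.neg_apply] at h2 ⊢
  linarith

lemma res_list_prod {s : ℕ} (hs : 1 ≤ s) (l : List (SLZT n))
    (h : ∀ z ∈ l, z ∈ KbarCong n s) :
    l.prod ∈ KbarCong n s ∧ res s l.prod = (l.map (res s)).sum := by
  induction l with
  | nil => exact ⟨(KbarCong n s).one_mem, by simpa using res_one s⟩
  | cons a t ih =>
    have ha : a ∈ KbarCong n s := h a (List.mem_cons_self)
    have ht : ∀ z ∈ t, z ∈ KbarCong n s := fun z hz => h z (List.mem_cons_of_mem a hz)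
    obtain ⟨hp, hr⟩ := ih ht
    refine ⟨?_, ?_⟩
    · rw [List.prod_cons]; exact (KbarCong n s).mul_mem ha hp
    · rw [List.prod_cons, res_mul hs ha hp, hr, List.map_cons, List.sum_cons]

section Quad

variable {A' : Type*} [Ring A']

lemma quad_expand (A B : A') (hA : A * A = 0) (hB : B * B = 0) :
    (1 + A) * (1 + B) * (1 + -A) * (1 + -B) =
      1 + A * B - B * A + B * A * B - A * B * A + A * B * A * B := by
  have e1 : (1 + A) * (1 + B) = 1 + A + B + A * B := by noncomm_ring
  have e2 : (1 + -A) * (1 + -B) = 1 - A - B + A * B := by noncomm_ring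
  have e3 : (1 + A) * (1 + B) * (1 + -A) * (1 + -B) =
      ((1 + A) * (1 + B)) * ((1 + -A) * (1 + -B)) := by noncomm_ring
  rw [e3, e1, e2]
  have expand : (1 + A + B + A * B) * (1 - A - B + A * B) =
      1 - A - B + A*B + (A - A*A - A*B + A*(A*B)) + (B - B*A - B*B + B*(A*B))
        + (A*B - (A*B)*A - (A*B)*B + (A*B)*(A*B)) := by noncomm_ring
  rw [expand]
  have h1 : A * (A * B) = 0 := by rw [← mul_assoc, hA, zero_mul]
  have h2 : (A * B) * B = 0 := by rw [mul_assoc, hB, mul_zero]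
  rw [hA, hB, h1, h2]
  noncomm_ring

end Quad

/-- `elem i j f = 1 + f E_{ij}` as an element of `SL_n(ℤ[[T]])`. -/
noncomputable def elem (i j : Fin n) (hij : i ≠ j) (f : R) : SLZT n :=
  ⟨Matrix.transvection i j f, Matrix.det_transvection_of_ne i j hij f⟩

lemma elem_coe (i j : Fin n) (hij : i ≠ j) (f : R) :
    (elem i j hij f).1 = 1 + Matrix.single i j f := rfl

lemma dvd_stdBasis_entry {α : Type*} [CommRing α] {d c : α} (h : d ∣ c)
    (i j a b : Fin n) : d ∣ Matrix.single i j c a b := by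
  by_cases ha : i = a
  · by_cases hb : j = b
    · subst ha; subst hb; simpa using h
    · rw [Matrix.single_apply_of_col_ne _ _ hb]; exact dvd_zero d
  · rw [Matrix.single_apply_of_row_ne ha]; exact dvd_zero d

lemma elem_mem {m : ℕ} {i j : Fin n} (hij : i ≠ j) {f : R} (h : TT ^ m ∣ f) :
    elem i j hij f ∈ KbarCong n m := by
  rw [mem_cong_iff]
  intro a b
  rw [elem_coe, add_sub_cancel_left]
  exact dvd_stdBasis_entry h i j a b

lemma elem_mem_Kbar {i j : Fin n} (hij : i ≠ j) {f : R} (h : TT ∣ f) :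
    elem i j hij f ∈ Kbar n := by
  rw [← cong_one_eq_Kbar]
  exact elem_mem hij (by simpa using h)

lemma elem_inv (i j : Fin n) (hij : i ≠ j) (f : R) :
    (elem i j hij f)⁻¹ = elem i j hij (-f) := by
  apply inv_eq_of_mul_eq_one_right
  apply Subtype.ext
  show Matrix.transvection i j f * Matrix.transvection i j (-f) = (1 : Matrix (Fin n) (Fin n) R)
  rw [Matrix.transvection_mul_transvection_same _ _ hij, add_neg_cancel,
    Matrix.transvection_zero]

lemma sq_zero (i j : Fin n) (hij : i ≠ j) (f : R) :
    Matrix.single i j f * Matrix.single i j f = 0 :=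
  Matrix.single_mul_single_of_ne _ _ _ _ (Ne.symm hij) _

lemma commutator_coe (u v : SLZT n) :
    (⁅u, v⁆ : SLZT n).1 = u.1 * v.1 * (u⁻¹).1 * (v⁻¹).1 := rfl

/-- Steinberg relation: `⁅e_{ij}(f), e_{jk}(g)⁆ = e_{ik}(fg)` for distinct `i,j,k`. -/
lemma steinberg {i j k : Fin n} (hij : i ≠ j) (hjk : j ≠ k) (hik : i ≠ k) (f g : R) :
    ⁅elem i j hij f, elem j k hjk g⁆ = elem i k hik (f * g) := by
  apply Subtype.ext
  rw [commutator_coe, elem_inv, elem_inv]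
  show (1 + Matrix.single i j f) * (1 + Matrix.single j k g) *
      (1 + Matrix.single i j (-f)) * (1 + Matrix.single j k (-g)) = _
  have hn1 : Matrix.single i j (-f) = -Matrix.single i j f := by
    ext a b
    simp [Matrix.single]
    split <;> simp
  have hn2 : Matrix.single j k (-g) = -Matrix.single j k g := by
    ext a b
    simp [Matrix.single]
    split <;> simp
  rw [hn1, hn2, quad_expand _ _ (sq_zero i j hij f) (sq_zero j k hjk g)]
  rw [Matrix.single_mul_single_same, Matrix.single_mul_single_of_ne _ _ _ _ (Ne.symm hik)]
  rw [Matrix.single_mul_single_of_ne _ _ _ _ (Ne.symm hik)]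
  simp [elem_coe]

/-- The commutator `⁅e_{ij}(f), e_{ji}(g)⁆` explicitly. -/
lemma diag_commutator {i j : Fin n} (hij : i ≠ j) (f g : R) :
    (⁅elem i j hij f, elem j i hij.symm g⁆ : SLZT n).1 =
      1 + Matrix.single i i (f * g) - Matrix.single j j (g * f)
        + Matrix.single j i (g * f * g) - Matrix.single i j (f * g * f)
        + Matrix.single i i (f * g * f * g) := by
  rw [commutator_coe, elem_inv, elem_inv]
  show (1 + Matrix.single i j f) * (1 + Matrix.single j i g) *
      (1 + Matrix.single i j (-f)) * (1 + Matrix.single j i (-g)) = _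
  have hn1 : Matrix.single i j (-f) = -Matrix.single i j f := by
    ext a b
    simp [Matrix.single]
    split <;> simp
  have hn2 : Matrix.single j i (-g) = -Matrix.single j i g := by
    ext a b
    simp [Matrix.single]
    split <;> simp
  rw [hn1, hn2, quad_expand _ _ (sq_zero i j hij f) (sq_zero j i hij.symm g)]
  simp only [Matrix.single_mul_single_same]


lemma trace_res_eq_zero {s : ℕ} (hs : 1 ≤ s) {x : SLZT n} (hx : x ∈ KbarCong n s) :
    Matrix.trace (res s x) = 0 := by
  rw [mem_cong_iff] at hx
  choose G hG using fun p : Fin n × Fin n => hx p.1 p.2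
  have hx1 : x.1 = 1 + (TT ^ s) • Matrix.of (fun i j => G (i, j)) := by
    ext i j
    have h := hG (i, j)
    simp only [Matrix.sub_apply] at h
    have h2 : x.1 i j = (1 : Matrix (Fin n) (Fin n) R) i j + TT ^ s * G (i, j) := by
      linear_combination h
    exact congrArg (PowerSeries.coeff _) h2
  have hdet : (x.1).det = 1 := x.2
  rw [hx1, Matrix.det_one_add_smul] at hdet
  set E := (Polynomial.eval (TT ^ s)
    (Polynomial.divX (Polynomial.divX (Matrix.det
      (1 + (Polynomial.X : Polynomial R) • (Matrix.of fun i j => G (i, j)).map Polynomial.C))))) with hE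
  have hz : TT ^ s * (Matrix.trace (Matrix.of fun i j => G (i, j)) + E * TT ^ s) = 0 := by
    linear_combination hdet
  have hX : (TT : R) ^ s ≠ 0 := pow_ne_zero _ PowerSeries.X_ne_zero
  have htr : Matrix.trace (Matrix.of fun i j => G (i, j)) = -(E * TT ^ s) := by
    rcases mul_eq_zero.mp hz with h | h
    · exact absurd h hX
    · linear_combination h
  have hres : ∀ i : Fin n, res s x i i = (PowerSeries.constantCoeff : PowerSeries ℤ →+* ℤ) (G (i, i)) := by
    intro i
    show PowerSeries.coeff s ((x.1 - 1) i i) = _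
    have h := hG (i, i)
    simp only [Matrix.sub_apply] at h ⊢
    rw [h]
    have := PowerSeries.coeff_X_pow_mul (G (i, i)) s 0
    rw [zero_add] at this
    rw [this, PowerSeries.coeff_zero_eq_constantCoeff]
  have : Matrix.trace (res s x) =
      (PowerSeries.constantCoeff : PowerSeries ℤ →+* ℤ) (Matrix.trace (Matrix.of fun i j => G (i, j))) := by
    rw [Matrix.trace, Matrix.trace]
    rw [map_sum]
    apply Finset.sum_congr rfl
    intro i _
    exact hres i
  rw [this, htr, map_neg]
  have : (PowerSeries.constantCoeff : PowerSeries ℤ →+* ℤ) (E * TT ^ s) = 0 := by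
    rw [← PowerSeries.X_dvd_iff]
    exact Dvd.dvd.mul_left (dvd_pow_self TT (by omega)) E
  rw [this, neg_zero]

lemma coeff_stdBasis (s : ℕ) (i j a b : Fin n) (h : R) :
    PowerSeries.coeff s (Matrix.single i j h a b) =
      Matrix.single i j (PowerSeries.coeff s h) a b := by
  by_cases ha : i = a
  · by_cases hb : j = b
    · subst ha; subst hb; simp
    · rw [Matrix.single_apply_of_col_ne _ _ hb,
        Matrix.single_apply_of_col_ne _ _ hb, map_zero]
  · rw [Matrix.single_apply_of_row_ne ha,
      Matrix.single_apply_of_row_ne ha, map_zero]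

lemma offdiag_slot {s : ℕ} (hs : 1 ≤ s) {p u q : Fin n}
    (hpu : p ≠ u) (huq : u ≠ q) (hpq : p ≠ q) (c : ℤ) :
    ⁅elem p u hpu TT, elem u q huq (PowerSeries.C c * TT ^ (s - 1))⁆ ∈ KbarCong n s ∧
    res s ⁅elem p u hpu TT, elem u q huq (PowerSeries.C c * TT ^ (s - 1))⁆ =
      Matrix.single p q c := by
  obtain ⟨m, rfl⟩ : ∃ m, s = m + 1 := ⟨s - 1, by omega⟩
  have hm : m + 1 - 1 = m := by omega
  have hprod : TT * (PowerSeries.C c * TT ^ (m + 1 - 1)) = PowerSeries.C c * TT ^ (m + 1) := by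
    rw [hm]; ring
  rw [steinberg hpu huq hpq, hprod]
  constructor
  · exact elem_mem hpq (Dvd.intro_left _ rfl)
  · funext a b
    show PowerSeries.coeff (m + 1)
      ((1 + Matrix.single p q (PowerSeries.C c * TT ^ (m + 1)) - 1) a b) = _
    rw [add_sub_cancel_left, coeff_stdBasis]
    rw [PowerSeries.coeff_C_mul, PowerSeries.coeff_X_pow, if_pos rfl, mul_one]

lemma diag_slot {s : ℕ} (hs : 2 ≤ s) {p q : Fin n} (hpq : p ≠ q) (c : ℤ) :
    ⁅elem p q hpq TT, elem q p hpq.symm (PowerSeries.C c * TT ^ (s - 1))⁆ ∈ KbarCong n s ∧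
    res s ⁅elem p q hpq TT, elem q p hpq.symm (PowerSeries.C c * TT ^ (s - 1))⁆ =
      Matrix.single p p c - Matrix.single q q c := by
  obtain ⟨m, rfl⟩ : ∃ m, s = m + 2 := ⟨s - 2, by omega⟩
  set f : R := TT with hf
  set g : R := PowerSeries.C c * TT ^ (m + 2 - 1) with hg
  set z := ⁅elem p q hpq f, elem q p hpq.symm g⁆ with hz
  have hmat : z.1 - 1 =
      Matrix.single p p (f * g) - Matrix.single q q (g * f)
        + Matrix.single q p (g * f * g) - Matrix.single p q (f * g * f)
        + Matrix.single p p (f * g * f * g) := by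
    rw [hz, diag_commutator hpq f g]
    abel
  have hm : m + 2 - 1 = m + 1 := by omega
  have h1 : f * g = PowerSeries.C c * TT ^ (m + 2) := by rw [hf, hg, hm]; ring
  have h2 : g * f = PowerSeries.C c * TT ^ (m + 2) := by rw [hf, hg, hm]; ring
  have hcc : PowerSeries.C (c * c) = PowerSeries.C c * PowerSeries.C c :=
    map_mul (PowerSeries.C : ℤ →+* PowerSeries ℤ) c c
  have h3 : g * f * g = PowerSeries.C (c * c) * TT ^ (m + 2 + (m + 1)) := by
    rw [hf, hg, hm, hcc]; ring
  have h4 : f * g * f = PowerSeries.C c * TT ^ (m + 2 + 1) := by rw [hf, hg, hm]; ring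
  have h5 : f * g * f * g = PowerSeries.C (c * c) * TT ^ (m + 2 + (m + 2)) := by
    rw [hf, hg, hm, hcc]; ring
  have hdvd : ∀ k : ℕ, m + 2 ≤ k → ∀ d : ℤ, TT ^ (m + 2) ∣ PowerSeries.C d * TT ^ k :=
    fun k hk d => Dvd.dvd.mul_left (pow_dvd_pow _ hk) _
  have hcoeff : ∀ k : ℕ, m + 2 < k → ∀ d : ℤ,
      PowerSeries.coeff (m + 2) (PowerSeries.C d * TT ^ k) = 0 := by
    intro k hk d
    rw [PowerSeries.coeff_C_mul, PowerSeries.coeff_X_pow, if_neg (by omega), mul_zero]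
  constructor
  · rw [mem_cong_iff]
    intro a b
    rw [hmat]
    simp only [Matrix.add_apply, Matrix.sub_apply]
    refine dvd_add (dvd_sub (dvd_add (dvd_sub ?_ ?_) ?_) ?_) ?_ <;>
      apply dvd_stdBasis_entry
    · rw [h1]; exact hdvd _ le_rfl _
    · rw [h2]; exact hdvd _ le_rfl _
    · rw [h3]; exact hdvd _ (by omega) _
    · rw [h4]; exact hdvd _ (by omega) _
    · rw [h5]; exact hdvd _ (by omega) _
  · funext a b
    show PowerSeries.coeff (m + 2) ((z.1 - 1) a b) = _
    rw [hmat]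
    simp only [Matrix.add_apply, Matrix.sub_apply, map_add, map_sub]
    rw [coeff_stdBasis, coeff_stdBasis, coeff_stdBasis, coeff_stdBasis, coeff_stdBasis]
    rw [h5, h4, h3, h2, h1]
    rw [hcoeff (m + 2 + (m + 1)) (by omega) (c * c), hcoeff (m + 2 + 1) (by omega) c,
      hcoeff (m + 2 + (m + 2)) (by omega) (c * c)]
    have hc : PowerSeries.coeff (m + 2) (PowerSeries.C c * TT ^ (m + 2)) = c := by
      rw [PowerSeries.coeff_C_mul, PowerSeries.coeff_X_pow, if_pos rfl, mul_one]
    rw [hc]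
    simp [Matrix.single_zero]

/-- A choice of an index distinct from both `p` and `q` (possible since `n ≥ 3`). -/
def third (hn : 3 ≤ n) (p q : Fin n) : Fin n :=
  if p.val = 0 ∨ q.val = 0 then
    (if p.val = 1 ∨ q.val = 1 then ⟨2, by omega⟩ else ⟨1, by omega⟩)
  else ⟨0, by omega⟩

lemma third_ne_left (hn : 3 ≤ n) (p q : Fin n) : p ≠ third hn p q := by
  unfold third
  split_ifs with h1 h2 <;> (intro h; apply_fun Fin.val at h; simp at h; omega)

lemma third_ne_right (hn : 3 ≤ n) (p q : Fin n) : third hn p q ≠ q := by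
  unfold third
  split_ifs with h1 h2 <;> (intro h; apply_fun Fin.val at h; simp at h; omega)

section Merge

lemma prod_split {H : Type*} [Group H] {L' : Type*} (l : List L') (P Q T : L' → H)
    (h1 : ∀ lam ∈ l, T lam = P lam * Q lam)
    (h2 : ∀ lam ∈ l, ∀ mu ∈ l, Commute (Q lam) (P mu)) :
    (l.map T).prod = (l.map P).prod * (l.map Q).prod := by
  induction l with
  | nil => simp
  | cons a tl ih =>
    simp only [List.map_cons, List.prod_cons]
    rw [h1 a (List.mem_cons_self),
      ih (fun lam hl => h1 lam (List.mem_cons_of_mem a hl))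
        (fun lam hl mu hm => h2 lam (List.mem_cons_of_mem a hl) mu (List.mem_cons_of_mem a hm))]
    have hc : Commute (Q a) ((tl.map P).prod) := by
      apply Commute.list_prod_right
      intro y hy
      rcases List.mem_map.mp hy with ⟨mu, hmu, rfl⟩
      exact h2 a (List.mem_cons_self) mu (List.mem_cons_of_mem a hmu)
    rw [mul_assoc (P a) (Q a), ← mul_assoc (Q a), hc.eq, mul_assoc, mul_assoc]

lemma merge_lemma {H : Type*} [Group H] (D : Subgroup H) [D.Normal] {L' : Type*}
    (l : List L') (p q t : L' → H)
    (h1 : ∀ lam ∈ l, t lam * (p lam * q lam)⁻¹ ∈ D)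
    (h2 : ∀ lam ∈ l, ∀ mu ∈ l, ⁅q lam, p mu⁆ ∈ D) :
    (l.map t).prod * ((l.map p).prod * (l.map q).prod)⁻¹ ∈ D := by
  set pi := QuotientGroup.mk' D with hpi
  have hker : ∀ z : H, pi z = 1 ↔ z ∈ D := fun z => QuotientGroup.eq_one_iff z
  rw [← hker]
  have hmap : ∀ f : L' → H, pi (l.map f).prod = (l.map (fun lam => pi (f lam))).prod := by
    intro f
    rw [map_list_prod, List.map_map]
    rfl
  rw [_root_.map_mul, map_inv, _root_.map_mul, hmap, hmap, hmap]
  rw [prod_split l (fun lam => pi (p lam)) (fun lam => pi (q lam)) (fun lam => pi (t lam))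
    (fun lam hl => by
      have := (hker _).mpr (h1 lam hl)
      rw [_root_.map_mul, map_inv, _root_.map_mul, mul_inv_eq_one] at this
      exact this)
    (fun lam hl mu hm => by
      have := (hker _).mpr (h2 lam hl mu hm)
      rw [map_commutatorElement] at this
      exact commutatorElement_eq_one_iff_commute.mp this)]
  rw [mul_inv_cancel]

end Merge

lemma ps_zero_of_forall_dvd {f : R} (h : ∀ m, TT ^ m ∣ f) : f = 0 := by
  ext d
  rw [coeff_eq_zero_of_dvd (h (d + 1)) (Nat.lt_succ_self d), map_zero]

lemma eq_one_of_all_cong {x : SLZT n} (h : ∀ m, x ∈ KbarCong n m) : x = 1 := by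
  apply Subtype.ext
  have : ∀ i j, (x.1 - 1) i j = 0 := by
    intro i j
    apply ps_zero_of_forall_dvd
    intro m
    exact (mem_cong_iff.mp (h m)) i j
  have h2 : x.1 - 1 = 0 := by
    apply Matrix.ext
    intro i j
    rw [this i j]
    rfl
  have := sub_eq_zero.mp h2
  exact this

lemma limit_exists (u : ℕ → SLZT n)
    (h : ∀ k i j, TT ^ k ∣ (((u (k + 1)).1 - (u k).1) i j)) :
    ∃ L : SLZT n, ∀ k i j, TT ^ k ∣ ((L.1 - (u k).1) i j) := by
  have stab : ∀ (i j : Fin n) (d t : ℕ), d < t →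
      PowerSeries.coeff d ((u t).1 i j) = PowerSeries.coeff d ((u (d + 1)).1 i j) := by
    intro i j d t ht
    induction t with
    | zero => omega
    | succ t ih =>
      rcases Nat.lt_or_ge d t with h' | h'
      · have hc := coeff_eq_zero_of_dvd (h t i j) h'
        rw [Matrix.sub_apply, map_sub, sub_eq_zero] at hc
        rw [hc]
        exact ih h'
      · have hdt : d + 1 = t + 1 := by omega
        rw [hdt]
  set Lmat : Matrix (Fin n) (Fin n) R :=
    Matrix.of fun i j => PowerSeries.mk fun d => PowerSeries.coeff d ((u (d + 1)).1 i j)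
    with hLmat
  have hLdiff : ∀ (k : ℕ) (i j : Fin n), TT ^ k ∣ ((Lmat - (u k).1) i j) := by
    intro k i j
    rw [PowerSeries.X_pow_dvd_iff]
    intro d hd
    rw [Matrix.sub_apply, map_sub, hLmat]
    show PowerSeries.coeff d (PowerSeries.mk fun e => PowerSeries.coeff e ((u (e + 1)).1 i j))
        - PowerSeries.coeff d ((u k).1 i j) = 0
    rw [PowerSeries.coeff_mk, stab i j d k hd, sub_self]
  have hdet : Lmat.det = 1 := by
    have hd : ∀ k : ℕ, TT ^ k ∣ (Lmat.det - 1) := by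
      intro k
      set mk' := Ideal.Quotient.mk (Ideal.span {(TT : R) ^ k}) with hmk
      have hcong : Lmat.map mk' = ((u k).1).map mk' := by
        ext i j
        show mk' (Lmat i j) = mk' ((u k).1 i j)
        rw [Ideal.Quotient.mk_eq_mk_iff_sub_mem, Ideal.mem_span_singleton]
        have := hLdiff k i j
        rwa [Matrix.sub_apply] at this
      have h1 : mk' Lmat.det = mk' ((u k).1.det) := by
        rw [RingHom.map_det, RingHom.map_det, RingHom.mapMatrix_apply, RingHom.mapMatrix_apply,
          hcong]
      rw [(u k).2] at h1
      rw [← Ideal.mem_span_singleton]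
      rw [Ideal.Quotient.mk_eq_mk_iff_sub_mem] at h1
      exact h1
    have := ps_zero_of_forall_dvd (f := Lmat.det - 1) hd
    linear_combination this
  exact ⟨⟨Lmat, hdet⟩, hLdiff⟩

section Slots

/-- The base point `0 : Fin n`. -/
def q0 (hn : 3 ≤ n) : Fin n := ⟨0, by omega⟩

/-- Fixed first components of commutators, one per slot. -/
noncomputable def aE (hn : 3 ≤ n) : Bool × Fin n × Fin n → SLZT n := fun lam =>
  if h : lam.2.1 ≠ lam.2.2 then
    (if lam.1 then elem lam.2.1 lam.2.2 h TT
     else elem lam.2.1 (third hn lam.2.1 lam.2.2) (third_ne_left hn lam.2.1 lam.2.2) TT)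
  else 1

/-- Second components of commutators at level `s`, targeting residue `A`. -/
noncomputable def wE (hn : 3 ≤ n) (s : ℕ) (A : Matrix (Fin n) (Fin n) ℤ) :
    Bool × Fin n × Fin n → SLZT n := fun lam =>
  if h : lam.2.1 ≠ lam.2.2 then
    (if lam.1 then
      elem lam.2.2 lam.2.1 (Ne.symm h)
        (PowerSeries.C (if lam.2.2 = q0 hn then A lam.2.1 lam.2.1 else 0) * TT ^ (s - 1))
     else
      elem (third hn lam.2.1 lam.2.2) lam.2.2 (third_ne_right hn lam.2.1 lam.2.2)
        (PowerSeries.C (A lam.2.1 lam.2.2) * TT ^ (s - 1)))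
  else 1

/-- Residue contribution of each slot. -/
noncomputable def contrib (hn : 3 ≤ n) (A : Matrix (Fin n) (Fin n) ℤ) :
    Bool × Fin n × Fin n → Matrix (Fin n) (Fin n) ℤ := fun lam =>
  if lam.2.1 ≠ lam.2.2 then
    (if lam.1 then
      Matrix.single lam.2.1 lam.2.1 (if lam.2.2 = q0 hn then A lam.2.1 lam.2.1 else 0)
        - Matrix.single lam.2.2 lam.2.2 (if lam.2.2 = q0 hn then A lam.2.1 lam.2.1 else 0)
     else Matrix.single lam.2.1 lam.2.2 (A lam.2.1 lam.2.2))
  else 0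

lemma aE_mem (hn : 3 ≤ n) (lam : Bool × Fin n × Fin n) : aE hn lam ∈ KbarCong n 1 := by
  unfold aE
  split_ifs with h h2
  · exact elem_mem _ (by rw [pow_one])
  · exact elem_mem _ (by rw [pow_one])
  · exact (KbarCong n 1).one_mem

lemma wE_mem (hn : 3 ≤ n) (s : ℕ) (A : Matrix (Fin n) (Fin n) ℤ)
    (lam : Bool × Fin n × Fin n) : wE hn s A lam ∈ KbarCong n (s - 1) := by
  unfold wE
  split_ifs with h h2 <;>
    first
      | exact elem_mem _ (Dvd.intro_left _ rfl)
      | exact (KbarCong n (s - 1)).one_mem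

lemma slot_comm_mem (hn : 3 ≤ n) {s : ℕ} (hs : 2 ≤ s) (A : Matrix (Fin n) (Fin n) ℤ)
    (lam : Bool × Fin n × Fin n) :
    ⁅aE hn lam, wE hn s A lam⁆ ∈ KbarCong n s ∧
      res s ⁅aE hn lam, wE hn s A lam⁆ = contrib hn A lam := by
  obtain ⟨b, p, q⟩ := lam
  by_cases h : p ≠ q
  · cases b
    · -- off-diagonal slot
      have ha : aE hn (false, p, q) =
          elem p (third hn p q) (third_ne_left hn p q) TT := by
        simp [aE, h]
      have hw : wE hn s A (false, p, q) =
          elem (third hn p q) q (third_ne_right hn p q)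
            (PowerSeries.C (A p q) * TT ^ (s - 1)) := by
        simp [wE, h]
      have hc : contrib hn A (false, p, q) = Matrix.single p q (A p q) := by
        simp [contrib, h]
      rw [ha, hw, hc]
      exact offdiag_slot (by omega) _ _ h (A p q)
    · -- diagonal slot
      have ha : aE hn (true, p, q) = elem p q h TT := by simp [aE, h]
      have hw : wE hn s A (true, p, q) =
          elem q p (Ne.symm h)
            (PowerSeries.C (if q = q0 hn then A p p else 0) * TT ^ (s - 1)) := by
        simp [wE, h]
      have hc : contrib hn A (true, p, q) =
          Matrix.single p p (if q = q0 hn then A p p else 0)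
            - Matrix.single q q (if q = q0 hn then A p p else 0) := by
        simp [contrib, h]
      rw [ha, hw, hc]
      exact diag_slot hs h _
  · have ha : aE hn (b, p, q) = 1 := by simp [aE, h]
    have hw : wE hn s A (b, p, q) = 1 := by simp [wE, h]
    have hc : contrib hn A (b, p, q) = 0 := by simp [contrib, h]
    rw [ha, hw, hc, commutatorElement_one_right]
    exact ⟨(KbarCong n s).one_mem, res_one s⟩

lemma stdBasis_sum (i j : Fin n) (f : Fin n → ℤ) :
    ∑ p : Fin n, Matrix.single i j (f p) = Matrix.single i j (∑ p, f p) := by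
  ext a b
  rw [Matrix.sum_apply]
  by_cases hi : i = a
  · by_cases hj : j = b
    · subst hi; subst hj; simp
    · simp [Matrix.single_apply_of_col_ne _ _ hj]
  · simp [Matrix.single_apply_of_row_ne hi]

lemma contrib_sum (hn : 3 ≤ n) (A : Matrix (Fin n) (Fin n) ℤ) (hA : Matrix.trace A = 0) :
    ∑ lam : Bool × Fin n × Fin n, contrib hn A lam = A := by
  classical
  rw [Fintype.sum_prod_type]
  rw [Fintype.sum_bool]
  set D := ∑ p : Fin n, Matrix.single p p (A p p) with hD
  have htrue : (∑ pq : Fin n × Fin n, contrib hn A (true, pq.1, pq.2)) = D := by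
    rw [Fintype.sum_prod_type]
    have hinner : ∀ p : Fin n, (∑ q : Fin n, contrib hn A (true, p, q)) =
        (if p ≠ q0 hn then
          Matrix.single p p (A p p) - Matrix.single (q0 hn) (q0 hn) (A p p)
         else 0) := by
      intro p
      rw [Finset.sum_eq_single (q0 hn)]
      · simp only [contrib, if_pos rfl]
        split_ifs with h1 <;> simp
      · intro q _ hq
        simp only [contrib, if_neg hq]
        split_ifs with h1 <;> simp
      · intro hmem
        exact absurd (Finset.mem_univ _) hmem
    rw [Finset.sum_congr rfl (fun p _ => hinner p)]
    have hpoint : ∀ p : Fin n,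
        (if p ≠ q0 hn then
          Matrix.single p p (A p p) - Matrix.single (q0 hn) (q0 hn) (A p p)
         else 0) =
        (Matrix.single p p (A p p) - Matrix.single (q0 hn) (q0 hn) (A p p)) := by
      intro p
      split_ifs with h1
      · rfl
      · push_neg at h1
        subst h1
        simp
    rw [Finset.sum_congr rfl (fun p _ => hpoint p), Finset.sum_sub_distrib]
    rw [stdBasis_sum]
    have : (∑ p : Fin n, A p p) = 0 := hA
    rw [this, Matrix.single_zero, sub_zero]
  have hfalse : (∑ pq : Fin n × Fin n, contrib hn A (false, pq.1, pq.2)) = A - D := by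
    rw [Fintype.sum_prod_type]
    have hinner : ∀ p : Fin n, (∑ q : Fin n, contrib hn A (false, p, q)) =
        (∑ q : Fin n, Matrix.single p q (A p q)) - Matrix.single p p (A p p) := by
      intro p
      have hpoint : ∀ q : Fin n, contrib hn A (false, p, q) =
          Matrix.single p q (A p q)
            - (if p = q then Matrix.single p q (A p q) else 0) := by
        intro q
        by_cases h : p = q
        · subst h; simp [contrib]
        · simp [contrib, h]
      rw [Finset.sum_congr rfl (fun q _ => hpoint q), Finset.sum_sub_distrib]
      congr 1
      rw [Finset.sum_ite_eq Finset.univ p (fun q => Matrix.single p q (A p q))]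
      simp
    rw [Finset.sum_congr rfl (fun p _ => hinner p), Finset.sum_sub_distrib, ← hD]
    congr 1
    exact (Matrix.matrix_eq_sum_single A).symm
  rw [htrue, hfalse]
  abel

end Slots

section Step

noncomputable def slotList (n : ℕ) : List (Bool × Fin n × Fin n) :=
  (Finset.univ : Finset (Bool × Fin n × Fin n)).toList

instance cong_normal (m : ℕ) : (KbarCong n m).Normal := MonoidHom.normal_ker _

lemma commutator_split (a b w : SLZT n) :
    ⁅a, b * w⁆ = ⁅a, b⁆ * ⁅a, w⁆ * ⁅⁅a, w⁆⁻¹, b⁆ := by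
  simp only [commutatorElement_def]
  group

lemma step_ex (hn : 3 ≤ n) {r k : ℕ} (hr : 1 ≤ r) (x y : SLZT n)
    (β : Bool × Fin n × Fin n → SLZT n)
    (hy : y ∈ KbarCong n (r + 1 + k)) (hβ : ∀ lam, β lam ∈ KbarCong n r)
    (hx : x = ((slotList n).map (fun lam => ⁅aE hn lam, β lam⁆)).prod * y) :
    ∃ (y' : SLZT n) (β' : Bool × Fin n × Fin n → SLZT n),
      y' ∈ KbarCong n (r + 1 + (k + 1)) ∧ (∀ lam, β' lam ∈ KbarCong n r) ∧
      x = ((slotList n).map (fun lam => ⁅aE hn lam, β' lam⁆)).prod * y' ∧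
      (∀ lam i j, TT ^ (r + k) ∣ (((β' lam).1 - (β lam).1) i j)) := by
  set s := r + 1 + k with hs
  have hs2 : 2 ≤ s := by omega
  have hs1 : 1 ≤ s := by omega
  have hsm : s - 1 = r + k := by omega
  set A := res s y with hA
  have htr : Matrix.trace A = 0 := trace_res_eq_zero hs1 hy
  set w := wE hn s A with hw
  have hwmem : ∀ lam, w lam ∈ KbarCong n (r + k) := fun lam => by
    rw [← hsm]; exact wE_mem hn s A lam
  have hq_mem : ∀ lam, ⁅aE hn lam, w lam⁆ ∈ KbarCong n s :=
    fun lam => (slot_comm_mem hn hs2 A lam).1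
  have hq_res : ∀ lam, res s ⁅aE hn lam, w lam⁆ = contrib hn A lam :=
    fun lam => (slot_comm_mem hn hs2 A lam).2
  set l := slotList n with hl
  set W := (l.map (fun lam => ⁅aE hn lam, w lam⁆)).prod with hW
  have hWfacts := res_list_prod hs1 (l.map (fun lam => ⁅aE hn lam, w lam⁆)) (by
    intro z hz
    rcases List.mem_map.mp hz with ⟨lam, _, rfl⟩
    exact hq_mem lam)
  have hWmem : W ∈ KbarCong n s := hWfacts.1
  have hres_W : res s W = A := by
    rw [hW]
    rw [hWfacts.2, List.map_map]
    have hcongr : (l.map ((res s) ∘ (fun lam => ⁅aE hn lam, w lam⁆))) =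
        l.map (contrib hn A) := by
      apply List.map_congr_left
      intro lam _
      exact hq_res lam
    rw [hcongr, hl]
    show ((Finset.univ.toList).map (contrib hn A)).sum = A
    rw [Finset.sum_map_toList]
    exact contrib_sum hn A htr
  have hy1 : W⁻¹ * y ∈ KbarCong n (s + 1) := by
    have hmem : W⁻¹ * y ∈ KbarCong n s := mul_mem (inv_mem hWmem) hy
    rw [mem_cong_succ_iff hmem, res_mul hs1 (inv_mem hWmem) hy, res_inv hs1 hWmem, hres_W]
    simp [hA]
  set β' := fun lam => β lam * w lam with hβ'
  have hmerge : ((l.map (fun lam => ⁅aE hn lam, β' lam⁆)).prod) *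
      (((l.map (fun lam => ⁅aE hn lam, β lam⁆)).prod) *
        ((l.map (fun lam => ⁅aE hn lam, w lam⁆)).prod))⁻¹ ∈ KbarCong n (s + 1) := by
    apply merge_lemma (KbarCong n (s + 1)) l
      (fun lam => ⁅aE hn lam, β lam⁆) (fun lam => ⁅aE hn lam, w lam⁆)
      (fun lam => ⁅aE hn lam, β' lam⁆)
    · intro lam _
      have hid : ⁅aE hn lam, β' lam⁆ =
          ⁅aE hn lam, β lam⁆ * ⁅aE hn lam, w lam⁆ * ⁅⁅aE hn lam, w lam⁆⁻¹, β lam⁆ := by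
        rw [hβ']
        exact commutator_split (aE hn lam) (β lam) (w lam)
      have hcmem : ⁅⁅aE hn lam, w lam⁆⁻¹, β lam⁆ ∈ KbarCong n (s + 1) :=
        cong_mono (by omega : s + 1 ≤ s + r)
          (commutator_mem_cong (inv_mem (hq_mem lam)) (hβ lam))
      have heq : ⁅aE hn lam, β' lam⁆ *
          (⁅aE hn lam, β lam⁆ * ⁅aE hn lam, w lam⁆)⁻¹ =
          (⁅aE hn lam, β lam⁆ * ⁅aE hn lam, w lam⁆) * ⁅⁅aE hn lam, w lam⁆⁻¹, β lam⁆ *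
            (⁅aE hn lam, β lam⁆ * ⁅aE hn lam, w lam⁆)⁻¹ := by
        rw [hid]
      rw [heq]
      exact Subgroup.Normal.conj_mem (cong_normal (s + 1)) _ hcmem _
    · intro lam _ mu _
      exact cong_mono (by omega : s + 1 ≤ s + (1 + r))
        (commutator_mem_cong (hq_mem lam)
          (commutator_mem_cong (aE_mem hn mu) (hβ mu)))
  refine ⟨((l.map (fun lam => ⁅aE hn lam, β' lam⁆)).prod)⁻¹ * x, β', ?_, ?_, ?_, ?_⟩
  · -- membership of the new remainder
    set Pt := (l.map (fun lam => ⁅aE hn lam, β' lam⁆)).prod with hPt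
    set Pp := (l.map (fun lam => ⁅aE hn lam, β lam⁆)).prod with hPp
    have hεmem : Pt * (Pp * W)⁻¹ ∈ KbarCong n (s + 1) := hmerge
    have hkey : Pt⁻¹ * x =
        (W⁻¹ * y) * (y⁻¹ * (Pp⁻¹ * (Pt * (Pp * W)⁻¹)⁻¹ * Pp) * y) := by
      rw [hx]
      group
    have hgoal : r + 1 + (k + 1) = s + 1 := by omega
    rw [hgoal, hkey]
    have hδ : Pp⁻¹ * (Pt * (Pp * W)⁻¹)⁻¹ * Pp ∈ KbarCong n (s + 1) := by
      have := Subgroup.Normal.conj_mem (cong_normal (s + 1)) _ (inv_mem hεmem) Pp⁻¹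
      rwa [inv_inv] at this
    have hconj : y⁻¹ * (Pp⁻¹ * (Pt * (Pp * W)⁻¹)⁻¹ * Pp) * y ∈ KbarCong n (s + 1) := by
      have := Subgroup.Normal.conj_mem (cong_normal (s + 1)) _ hδ y⁻¹
      rwa [inv_inv] at this
    exact mul_mem hy1 hconj
  · intro lam
    exact mul_mem (hβ lam) (cong_mono (by omega : r ≤ r + k) (hwmem lam))
  · group
  · intro lam i j
    have hmul : (β' lam).1 - (β lam).1 = (β lam).1 * ((w lam).1 - 1) := by
      show (β lam * w lam).1 - (β lam).1 = _
      have hc : (β lam * w lam).1 = (β lam).1 * (w lam).1 := rfl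
      rw [hc]
      noncomm_ring
    rw [hmul]
    have h0 : ∀ i j, TT ^ 0 ∣ ((β lam).1) i j := fun i j => by simp
    have hd := dvd_entries_mul h0 (mem_cong_iff.mp (hwmem lam)) i j
    rwa [zero_add] at hd

end Step

lemma main_lemma (hn : 3 ≤ n) {r : ℕ} (hr : 1 ≤ r) {x : SLZT n}
    (hx : x ∈ KbarCong n (r + 1)) :
    x ∈ ⁅KbarCong n 1, KbarCong n r⁆ := by
  classical
  set l := slotList n with hl
  let Inv : ℕ → (SLZT n × ((Bool × Fin n × Fin n) → SLZT n)) → Prop := fun k st =>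
    st.1 ∈ KbarCong n (r + 1 + k) ∧ (∀ lam, st.2 lam ∈ KbarCong n r) ∧
      x = ((l.map (fun lam => ⁅aE hn lam, st.2 lam⁆)).prod) * st.1
  have hInv0 : Inv 0 (x, fun _ => 1) := by
    refine ⟨by simpa using hx, fun lam => (KbarCong n r).one_mem, ?_⟩
    have hone : (l.map (fun lam => ⁅aE hn lam, (1 : SLZT n)⁆)).prod = 1 := by
      apply List.prod_eq_one
      intro z hz
      rcases List.mem_map.mp hz with ⟨lam, _, rfl⟩
      exact commutatorElement_one_right _
    show x = (l.map (fun lam => ⁅aE hn lam, (1 : SLZT n)⁆)).prod * x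
    rw [hone, one_mul]
  have hstep : ∀ k (st : SLZT n × ((Bool × Fin n × Fin n) → SLZT n)), Inv k st →
      ∃ st', Inv (k + 1) st' ∧
        (∀ lam i j, TT ^ (r + k) ∣ (((st'.2 lam).1 - (st.2 lam).1) i j)) := by
    intro k st hst
    obtain ⟨y', β', h1, h2, h3, h4⟩ := step_ex hn hr x st.1 st.2 hst.1 hst.2.1 hst.2.2
    exact ⟨(y', β'), ⟨h1, h2, h3⟩, h4⟩
  let S : (k : ℕ) → {st // Inv k st} := fun k =>
    Nat.rec ⟨(x, fun _ => 1), hInv0⟩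
      (fun k prev => ⟨Classical.choose (hstep k prev.1 prev.2),
        (Classical.choose_spec (hstep k prev.1 prev.2)).1⟩) k
  have hCauchy : ∀ k lam i j,
      TT ^ (r + k) ∣ ((((S (k + 1)).1.2 lam).1 - ((S k).1.2 lam).1) i j) := by
    intro k lam i j
    exact (Classical.choose_spec (hstep k (S k).1 (S k).2)).2 lam i j
  have hlim : ∀ lam, ∃ L : SLZT n, ∀ k i j,
      TT ^ k ∣ ((L.1 - ((S k).1.2 lam).1) i j) := by
    intro lam
    apply limit_exists (fun k => (S k).1.2 lam)
    intro k i j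
    exact dvd_trans (pow_dvd_pow TT (by omega : k ≤ r + k)) (hCauchy k lam i j)
  choose B hB using hlim
  have hBr : ∀ lam, B lam ∈ KbarCong n r := by
    intro lam
    rw [mem_cong_iff]
    intro i j
    have h1 := hB lam r i j
    have h2 := mem_cong_iff.mp ((S r).2.2.1 lam) i j
    have hsplit : (B lam).1 - 1 =
        ((B lam).1 - ((S r).1.2 lam).1) + (((S r).1.2 lam).1 - 1) :=
      (sub_add_sub_cancel _ _ _).symm
    rw [hsplit, Matrix.add_apply]
    exact dvd_add h1 h2
  have hfin : ∀ m, x * ((l.map (fun lam => ⁅aE hn lam, B lam⁆)).prod)⁻¹ ∈ KbarCong n m := by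
    intro m
    rw [mem_cong_iff_phi, _root_.map_mul, map_inv]
    have hinv := (S m).2
    have hym : phi n m (S m).1.1 = 1 :=
      mem_cong_iff_phi.mp (cong_mono (by omega : m ≤ r + 1 + m) hinv.1)
    have hxphi : phi n m x =
        phi n m ((l.map (fun lam => ⁅aE hn lam, (S m).1.2 lam⁆)).prod) := by
      conv_lhs => rw [hinv.2.2]
      rw [_root_.map_mul, hym, mul_one]
    have hProds : phi n m ((l.map (fun lam => ⁅aE hn lam, (S m).1.2 lam⁆)).prod)
        = phi n m ((l.map (fun lam => ⁅aE hn lam, B lam⁆)).prod) := by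
      rw [map_list_prod, map_list_prod, List.map_map, List.map_map]
      congr 1
      apply List.map_congr_left
      intro lam _
      show phi n m ⁅aE hn lam, (S m).1.2 lam⁆ = phi n m ⁅aE hn lam, B lam⁆
      rw [map_commutatorElement, map_commutatorElement]
      have hphiB : phi n m (B lam) = phi n m ((S m).1.2 lam) :=
        phi_eq_of_dvd (fun i j => hB lam m i j)
      rw [hphiB]
    rw [hxphi, hProds, mul_inv_cancel]
  have heq : x = (l.map (fun lam => ⁅aE hn lam, B lam⁆)).prod :=
    mul_inv_eq_one.mp (eq_one_of_all_cong hfin)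
  rw [heq]
  apply list_prod_mem
  intro z hz
  rcases List.mem_map.mp hz with ⟨lam, _, rfl⟩
  exact Subgroup.commutator_mem_commutator (aE_mem hn lam) (hBr lam)

lemma cong_le_Kbar {m : ℕ} (hm : 1 ≤ m) : KbarCong n m ≤ Kbar n := by
  rw [← cong_one_eq_Kbar]
  exact cong_mono hm

lemma mem_commutator_subgroupOf {H1 H2 : Subgroup (SLZT n)}
    (h1 : H1 ≤ Kbar n) (h2 : H2 ≤ Kbar n) {g : ↥(Kbar n)}
    (hg : (g : SLZT n) ∈ ⁅H1, H2⁆) :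
    g ∈ ⁅H1.subgroupOf (Kbar n), H2.subgroupOf (Kbar n)⁆ := by
  have hmap : (⁅H1.subgroupOf (Kbar n), H2.subgroupOf (Kbar n)⁆).map (Kbar n).subtype
      = ⁅H1, H2⁆ := by
    rw [Subgroup.map_commutator, Subgroup.subgroupOf_map_subtype,
      Subgroup.subgroupOf_map_subtype, inf_eq_left.mpr h1, inf_eq_left.mpr h2]
  rw [← hmap] at hg
  rcases Subgroup.mem_map.mp hg with ⟨y, hy, hyx⟩
  have hyg : y = g := Subtype.ext hyx
  rwa [← hyg]

lemma LCS_eq (hn : 3 ≤ n) (m : ℕ) :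
    (⊤ : Subgroup ↥(Kbar n)).lowerCentralSeries m = (KbarCong n (m + 1)).subgroupOf (Kbar n) := by
  induction m with
  | zero =>
    rw [Subgroup.lowerCentralSeries_zero, cong_one_eq_Kbar, Subgroup.subgroupOf_self]
  | succ m ih =>
    have hstep : (⊤ : Subgroup ↥(Kbar n)).lowerCentralSeries (m + 1) =
        ⁅(⊤ : Subgroup ↥(Kbar n)).lowerCentralSeries m, ⊤⁆ := rfl
    rw [hstep, ih]
    apply le_antisymm
    · rw [Subgroup.commutator_le]
      intro g hg h _
      rw [Subgroup.mem_subgroupOf] at hg ⊢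
      have hco : ((⁅g, h⁆ : ↥(Kbar n)) : SLZT n) = ⁅(g : SLZT n), (h : SLZT n)⁆ :=
        map_commutatorElement ((Kbar n).subtype) g h
      rw [hco]
      have hh : (h : SLZT n) ∈ KbarCong n 1 := by
        rw [cong_one_eq_Kbar]; exact h.2
      exact commutator_mem_cong hg hh
    · intro g hg
      rw [Subgroup.mem_subgroupOf] at hg
      have hmain : (g : SLZT n) ∈ ⁅KbarCong n 1, KbarCong n (m + 1)⁆ :=
        main_lemma hn (by omega) hg
      rw [Subgroup.commutator_comm] at hmain
      have htrans := mem_commutator_subgroupOf (cong_le_Kbar (by omega))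
        (cong_le_Kbar (by omega)) hmain
      rwa [cong_one_eq_Kbar, Subgroup.subgroupOf_self] at htrans

end Stmt14

/-- For `n ≥ 3`, the lower central series of `K̄` coincides with its `T`-adic
congruence filtration: `Γ^r K̄ = K̄^r` for all `r ≥ 1`. -/
theorem stmt14 (n : ℕ) (hn : 3 ≤ n) (r : ℕ) (hr : 1 ≤ r) :
    (⊤ : Subgroup ↥(Kbar n)).lowerCentralSeries (r - 1) = (KbarCong n r).subgroupOf (Kbar n) := by
  have h := Stmt14.LCS_eq hn (r - 1)
  have hr1 : r - 1 + 1 = r := by omega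
  rwa [hr1] at h
end

section
/- Let G be a group and Ḡ = lim← G/Γ^r G its pronilpotent completion. The map Ḡ → \overline{Ḡ} (the pronilpotent completion of Ḡ) is an isomorphism if and only if for every r ≥ 1 the natural map G/Γ^r G → Ḡ/Γ^r Ḡ is an isomorphism. -/
/-- The pronilpotent completion `Ḡ = lim← G/Γ^{r+1} G`, realized as the subgroup of
compatible families in `Π r, G ⧸ Γ^{r+1} G` (Mathlib's `lowerCentralSeries G r`
is `Γ^{r+1} G`). -/
noncomputable def nilpComp (G : Type*) [Group G] :
    Subgroup (∀ r : ℕ, G ⧸ (⊤ : Subgroup G).lowerCentralSeries r) where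
  carrier := {f | ∀ r : ℕ,
    Subgroup.quotientMapOfLE
      (Subgroup.lowerCentralSeries_antitone (S := (⊤ : Subgroup G)) (Nat.le_succ r)) (f (r + 1)) = f r}
  one_mem' := by
    intro r
    show Subgroup.quotientMapOfLE _ ((1 : G) : G ⧸ _) = _
    rw [Subgroup.quotientMapOfLE_apply_mk]
    rfl
  mul_mem' := by
    intro a b ha hb r
    obtain ⟨x, hx⟩ := QuotientGroup.mk_surjective (a (r + 1))
    obtain ⟨y, hy⟩ := QuotientGroup.mk_surjective (b (r + 1))
    show Subgroup.quotientMapOfLE _ (a (r + 1) * b (r + 1)) = a r * b r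
    rw [← ha r, ← hb r, ← hx, ← hy, ← QuotientGroup.mk_mul,
      Subgroup.quotientMapOfLE_apply_mk, Subgroup.quotientMapOfLE_apply_mk,
      Subgroup.quotientMapOfLE_apply_mk, QuotientGroup.mk_mul]
  inv_mem' := by
    intro a ha r
    obtain ⟨x, hx⟩ := QuotientGroup.mk_surjective (a (r + 1))
    show Subgroup.quotientMapOfLE _ ((a (r + 1))⁻¹) = (a r)⁻¹
    rw [← ha r, ← hx, ← QuotientGroup.mk_inv, Subgroup.quotientMapOfLE_apply_mk,
      Subgroup.quotientMapOfLE_apply_mk, QuotientGroup.mk_inv]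

/-- The canonical homomorphism `G → Ḡ`. -/
noncomputable def nilpHom (G : Type*) [Group G] : G →* ↥(nilpComp G) where
  toFun g := ⟨fun r => (g : G ⧸ (⊤ : Subgroup G).lowerCentralSeries r),
    fun r => Subgroup.quotientMapOfLE_apply_mk _ g⟩
  map_one' := by ext r; rfl
  map_mul' x y := by ext r; rfl

namespace Bousfield

variable {G : Type*} [Group G]

lemma lcs_map_eq {H : Type*} [Group H] (f : G →* H) (hf : Function.Surjective f) (n : ℕ) :
    Subgroup.map f ((⊤ : Subgroup G).lowerCentralSeries n) = (⊤ : Subgroup H).lowerCentralSeries n := by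
  induction n with
  | zero => simpa using Subgroup.map_top_of_surjective f hf
  | succ n ih =>
    show Subgroup.map f ⁅(⊤ : Subgroup G).lowerCentralSeries n, ⊤⁆ = ⁅(⊤ : Subgroup H).lowerCentralSeries n, ⊤⁆
    rw [Subgroup.map_commutator, ih, Subgroup.map_top_of_surjective f hf]

lemma lcs_quot_bot (G : Type*) [Group G] (r : ℕ) :
    (⊤ : Subgroup (G ⧸ (⊤ : Subgroup G).lowerCentralSeries r)).lowerCentralSeries r = ⊥ := by
  rw [← lcs_map_eq (QuotientGroup.mk' _) (QuotientGroup.mk'_surjective _) r,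
    Subgroup.map_eq_bot_iff, QuotientGroup.ker_mk']

lemma compat (g : ↥(nilpComp G)) (r : ℕ) :
    Subgroup.quotientMapOfLE (Subgroup.lowerCentralSeries_antitone (S := (⊤ : Subgroup _)) (Nat.le_succ r)) (g.1 (r+1))
      = g.1 r := g.2 r

/-- projection to level r -/
noncomputable def projHom (G : Type*) [Group G] (r : ℕ) :
    ↥(nilpComp G) →* G ⧸ (⊤ : Subgroup G).lowerCentralSeries r :=
  (Pi.evalMonoidHom _ r).comp (nilpComp G).subtype

@[simp] lemma projHom_apply (r : ℕ) (g : ↥(nilpComp G)) : projHom G r g = g.1 r := rfl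

@[simp] lemma projHom_nilpHom (r : ℕ) (g : G) :
    projHom G r (nilpHom G g) = (g : G ⧸ (⊤ : Subgroup G).lowerCentralSeries r) := rfl

lemma lcs_le_ker (G : Type*) [Group G] (r : ℕ) :
    (⊤ : Subgroup ↥(nilpComp G)).lowerCentralSeries r ≤ (projHom G r).ker := by
  intro x hx
  have h1 : projHom G r x ∈ (⊤ : Subgroup (G ⧸ (⊤ : Subgroup G).lowerCentralSeries r)).lowerCentralSeries r :=
    Subgroup.lowerCentralSeries.map (projHom G r) r (Subgroup.mem_map_of_mem _ hx)
  rw [lcs_quot_bot G r, Subgroup.mem_bot] at h1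
  exact h1

noncomputable def qHom (G : Type*) [Group G] (r : ℕ) :
    ↥(nilpComp G) ⧸ (⊤ : Subgroup ↥(nilpComp G)).lowerCentralSeries r →* G ⧸ (⊤ : Subgroup G).lowerCentralSeries r :=
  QuotientGroup.lift _ (projHom G r) (lcs_le_ker G r)

@[simp] lemma qHom_mk (r : ℕ) (g : ↥(nilpComp G)) :
    qHom G r (QuotientGroup.mk g) = g.1 r := rfl


noncomputable def fbar (G : Type*) [Group G] (r : ℕ) :
    G ⧸ (⊤ : Subgroup G).lowerCentralSeries r →* ↥(nilpComp G) ⧸ (⊤ : Subgroup ↥(nilpComp G)).lowerCentralSeries r :=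
  QuotientGroup.map ((⊤ : Subgroup G).lowerCentralSeries r)
    ((⊤ : Subgroup ↥(nilpComp G)).lowerCentralSeries r) (nilpHom G)
    (fun x hx => Subgroup.lowerCentralSeries.map (nilpHom G) r (Subgroup.mem_map_of_mem _ hx))

lemma qf (r : ℕ) (x : G ⧸ (⊤ : Subgroup G).lowerCentralSeries r) : qHom G r (fbar G r x) = x := by
  obtain ⟨g, rfl⟩ := QuotientGroup.mk_surjective x
  rfl

lemma fbar_inj (r : ℕ) : Function.Injective (fbar G r) := by
  intro a b h
  have := congrArg (qHom G r) h
  rwa [qf, qf] at this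

lemma coord_one_succ (g : ↥(nilpComp G)) (t : ℕ) (h : g.1 (t+1) = 1) : g.1 t = 1 := by
  rw [← compat g t, h, ← QuotientGroup.mk_one, Subgroup.quotientMapOfLE_apply_mk,
    QuotientGroup.mk_one]

lemma coord_one_of_le (g : ↥(nilpComp G)) {s t : ℕ} (h : s ≤ t) (hgt : g.1 t = 1) :
    g.1 s = 1 := by
  induction t with
  | zero => exact Nat.le_zero.mp h ▸ hgt
  | succ t ih =>
    rcases Nat.lt_or_ge s (t+1) with hlt | hge
    · exact ih (Nat.lt_succ_iff.mp hlt) (coord_one_succ g t hgt)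
    · exact (Nat.le_antisymm h hge) ▸ hgt

lemma nilpHom_injective (G : Type*) [Group G] :
    Function.Injective (nilpHom ↥(nilpComp G)) := by
  rw [injective_iff_map_eq_one]
  intro g hg
  ext r
  have h1 : ((g : ↥(nilpComp G) ⧸ (⊤ : Subgroup ↥(nilpComp G)).lowerCentralSeries r)) = 1 :=
    congrFun (congrArg Subtype.val hg) r
  have h2 : g ∈ (⊤ : Subgroup ↥(nilpComp G)).lowerCentralSeries r := (QuotientGroup.eq_one_iff g).mp h1
  have h3 : projHom G r g = 1 := lcs_le_ker G r h2
  simpa using h3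
/-- Correcting step: multiply by the image of a lift of the (s+1)-coordinate. -/
noncomputable def stepN (G : Type*) [Group G] (s : ℕ) (n : ↥(nilpComp G)) :
    ↥(nilpComp G) :=
  n * (nilpHom G ((QuotientGroup.mk_surjective (n.1 (s+1))).choose))⁻¹

lemma coe_mul_inv (n m : ↥(nilpComp G)) (s : ℕ) :
    (n * m⁻¹).1 s = n.1 s * (m.1 s)⁻¹ := rfl

lemma stepN_coord (s : ℕ) (n : ↥(nilpComp G)) : (stepN G s n).1 (s+1) = 1 := by
  have h := (QuotientGroup.mk_surjective (n.1 (s+1))).choose_spec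
  rw [stepN, coe_mul_inv]
  rw [show ((nilpHom G ((QuotientGroup.mk_surjective (n.1 (s+1))).choose)).1 (s+1) :
    G ⧸ (⊤ : Subgroup G).lowerCentralSeries (s+1)) = n.1 (s+1) from h]
  exact mul_inv_cancel _

lemma stepN_diff (s : ℕ) (n : ↥(nilpComp G)) (hn : n.1 s = 1) :
    n * (stepN G s n)⁻¹ ∈ (⊤ : Subgroup ↥(nilpComp G)).lowerCentralSeries s := by
  set b := (QuotientGroup.mk_surjective (n.1 (s+1))).choose with hb
  have hbs : (QuotientGroup.mk b : G ⧸ (⊤ : Subgroup G).lowerCentralSeries (s+1)) = n.1 (s+1) :=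
    (QuotientGroup.mk_surjective (n.1 (s+1))).choose_spec
  have hbmem : b ∈ (⊤ : Subgroup G).lowerCentralSeries s := by
    rw [← QuotientGroup.eq_one_iff]
    have := compat n s
    rw [← hbs, Subgroup.quotientMapOfLE_apply_mk] at this
    rw [this, hn]
  have hν : nilpHom G b ∈ (⊤ : Subgroup ↥(nilpComp G)).lowerCentralSeries s :=
    Subgroup.lowerCentralSeries.map (nilpHom G) s (Subgroup.mem_map_of_mem _ hbmem)
  have : n * (stepN G s n)⁻¹ = n * (nilpHom G b) * n⁻¹ := by
    rw [stepN, ← hb]; group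
  rw [this]
  exact (Subgroup.lowerCentralSeries_normal _ s).conj_mem _ hν n

/-- the sequence of corrections starting from `g` at level `r` -/
noncomputable def seqN (G : Type*) [Group G] (r : ℕ) (g : ↥(nilpComp G)) :
    ℕ → ↥(nilpComp G)
  | 0 => g
  | k+1 => stepN G (r+k) (seqN G r g k)

lemma seqN_coord (r : ℕ) (g : ↥(nilpComp G)) (hg : g.1 r = 1) (k : ℕ) :
    (seqN G r g k).1 (r+k) = 1 := by
  induction k with
  | zero => exact hg
  | succ k _ => exact stepN_coord (r+k) (seqN G r g k)

lemma seqN_diff (r : ℕ) (g : ↥(nilpComp G)) (hg : g.1 r = 1) (k : ℕ) :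
    seqN G r g k * (seqN G r g (k+1))⁻¹ ∈ (⊤ : Subgroup ↥(nilpComp G)).lowerCentralSeries (r+k) :=
  stepN_diff (r+k) (seqN G r g k) (seqN_coord r g hg k)
lemma quotientMapOfLE_one {H K : Subgroup G} [H.Normal] [K.Normal] (h : H ≤ K) :
    Subgroup.quotientMapOfLE h (1 : G ⧸ H) = 1 := by
  rw [← QuotientGroup.mk_one, Subgroup.quotientMapOfLE_apply_mk, QuotientGroup.mk_one]

lemma ker_proj_le (G : Type*) [Group G]
    (hsurj : Function.Surjective (nilpHom ↥(nilpComp G))) (r : ℕ)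
    (g : ↥(nilpComp G)) (hg : g.1 r = 1) :
    g ∈ (⊤ : Subgroup ↥(nilpComp G)).lowerCentralSeries r := by

  set x : ∀ s : ℕ, ↥(nilpComp G) ⧸ (⊤ : Subgroup ↥(nilpComp G)).lowerCentralSeries s := fun s =>
    if h : r ≤ s then (QuotientGroup.mk (g * (seqN G r g (s-r))⁻¹)) else 1 with hxdef
  have hx : ∀ s : ℕ, Subgroup.quotientMapOfLE
      (Subgroup.lowerCentralSeries_antitone (S := (⊤ : Subgroup _)) (Nat.le_succ s)) (x (s + 1)) = x s := by
    intro s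
    by_cases h : r ≤ s
    · have h1 : r ≤ s + 1 := h.trans (Nat.le_succ s)
      rw [hxdef]
      simp only [dif_pos h, dif_pos h1, Subgroup.quotientMapOfLE_apply_mk]
      rw [QuotientGroup.eq]
      have harith : s + 1 - r = (s - r) + 1 := by omega
      rw [harith]
      have hmem := seqN_diff r g hg (s - r)
      rw [Nat.add_sub_cancel' h] at hmem
      have : (g * (seqN G r g (s - r + 1))⁻¹)⁻¹ * (g * (seqN G r g (s - r))⁻¹)
          = (seqN G r g (s - r) * (seqN G r g (s - r + 1))⁻¹)⁻¹ := by group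
      rw [this]
      exact Subgroup.inv_mem _ hmem
    · by_cases h1 : r ≤ s + 1
      · have hr : r = s + 1 := by omega
        rw [hxdef]
        simp only [dif_pos h1, dif_neg h]
        have : s + 1 - r = 0 := by omega
        rw [this]
        have : g * (seqN G r g 0)⁻¹ = 1 := by
          show g * g⁻¹ = 1; group
        rw [this, QuotientGroup.mk_one, quotientMapOfLE_one]
      · rw [hxdef]
        simp only [dif_neg h, dif_neg h1]
        exact quotientMapOfLE_one _
  obtain ⟨n, hn⟩ := hsurj ⟨x, hx⟩
  have hcoord : ∀ s, (QuotientGroup.mk n : ↥(nilpComp G) ⧸ (⊤ : Subgroup ↥(nilpComp G)).lowerCentralSeries s) = x s :=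
    fun s => congrFun (congrArg Subtype.val hn) s
  have hng : n = g := by
    ext s
    have h1 : n.1 s = qHom G s (QuotientGroup.mk n) := rfl
    rw [h1, hcoord s, hxdef]
    by_cases h : r ≤ s
    · simp only [dif_pos h]
      have h2 : qHom G s (QuotientGroup.mk (g * (seqN G r g (s-r))⁻¹))
          = g.1 s * ((seqN G r g (s-r)).1 s)⁻¹ := rfl
      rw [h2]
      have h3 := seqN_coord r g hg (s - r)
      rw [Nat.add_sub_cancel' h] at h3
      rw [h3]
      group
    · simp only [dif_neg h]
      have h2 : qHom G s (1 : ↥(nilpComp G) ⧸ (⊤ : Subgroup ↥(nilpComp G)).lowerCentralSeries s) = 1 := map_one _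
      rw [h2]
      exact (coord_one_of_le g (by omega) hg).symm
  have hr := hcoord r
  rw [hng, hxdef] at hr
  simp only [dif_pos (le_refl r), Nat.sub_self] at hr
  have : g * (seqN G r g 0)⁻¹ = 1 := by show g * g⁻¹ = 1; group
  rw [this, QuotientGroup.mk_one] at hr
  exact (QuotientGroup.eq_one_iff g).mp hr
end Bousfield

open Bousfield in
/-- Bousfield's Lemma 13.4: for `Ḡ = lim← G/Γ^r G`, the canonical map
`Ḡ → \bar{Ḡ}` is an isomorphism iff each natural map `G/Γ^r G → Ḡ/Γ^r Ḡ`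
is an isomorphism. -/
theorem stmt19 (G : Type*) [Group G] :
    Function.Bijective (nilpHom ↥(nilpComp G)) ↔
    ∀ r : ℕ, Function.Bijective
      (QuotientGroup.map ((⊤ : Subgroup G).lowerCentralSeries r)
        ((⊤ : Subgroup ↥(nilpComp G)).lowerCentralSeries r) (nilpHom G)
        (fun x hx => Subgroup.lowerCentralSeries.map (nilpHom G) r
          (Subgroup.mem_map_of_mem _ hx))) := by
  constructor
  · intro hbij r
    show Function.Bijective (fbar G r)
    refine ⟨fbar_inj r, ?_⟩
    intro y
    obtain ⟨n, rfl⟩ := QuotientGroup.mk_surjective y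
    obtain ⟨a, ha⟩ := QuotientGroup.mk_surjective (n.1 r)
    refine ⟨QuotientGroup.mk a, ?_⟩
    show (QuotientGroup.mk (nilpHom G a) :
      ↥(nilpComp G) ⧸ (⊤ : Subgroup ↥(nilpComp G)).lowerCentralSeries r) = QuotientGroup.mk n
    rw [QuotientGroup.eq]
    have hk : (n * (nilpHom G a)⁻¹).1 r = 1 := by
      rw [coe_mul_inv]
      rw [show ((nilpHom G a).1 r : G ⧸ (⊤ : Subgroup G).lowerCentralSeries r) = n.1 r from ha]
      exact mul_inv_cancel _
    have hmem := ker_proj_le G hbij.2 r _ hk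
    have hconj := (Subgroup.lowerCentralSeries_normal _ r).conj_mem _ hmem (nilpHom G a)⁻¹
    have heq : (nilpHom G a)⁻¹ * (n * (nilpHom G a)⁻¹) * ((nilpHom G a)⁻¹)⁻¹
        = (nilpHom G a)⁻¹ * n := by group
    rwa [heq] at hconj
  · intro hall
    have hall' : ∀ r, Function.Bijective (fbar G r) := hall
    refine ⟨nilpHom_injective G, ?_⟩
    intro y
    have hq_inj : ∀ s, Function.Injective (qHom G s) := by
      intro s a b hab
      obtain ⟨u, rfl⟩ := (hall' s).2 a
      obtain ⟨v, rfl⟩ := (hall' s).2 b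
      rw [qf, qf] at hab
      rw [hab]
    have hcompat : ∀ s : ℕ, Subgroup.quotientMapOfLE
        (Subgroup.lowerCentralSeries_antitone (S := (⊤ : Subgroup _)) (Nat.le_succ s)) (qHom G (s+1) (y.1 (s+1)))
        = qHom G s (y.1 s) := by
      intro s
      obtain ⟨m, hm⟩ := QuotientGroup.mk_surjective (y.1 (s+1))
      rw [← hm, ← compat y s, ← hm]
      rw [show (qHom G (s+1) (QuotientGroup.mk m) : G ⧸ (⊤ : Subgroup G).lowerCentralSeries (s+1))
        = m.1 (s+1) from rfl]
      rw [Subgroup.quotientMapOfLE_apply_mk]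
      rw [show (qHom G s (QuotientGroup.mk m) : G ⧸ (⊤ : Subgroup G).lowerCentralSeries s)
        = m.1 s from rfl]
      exact compat m s
    refine ⟨⟨fun s => qHom G s (y.1 s), hcompat⟩, Subtype.ext (funext fun s => ?_)⟩
    exact hq_inj s rfl
end
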